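/- arXiv:1910.12059 — 13 statements merged into one kernel-verified Lean document; each statement's English description precedes it below -/
import Mathlib

section
/- Let B be a fusion algebra with ℝ_{≥0}-basis {x_1 = 1, ..., x_m} and structure constants N_{j,k}^s ≥ 0 satisfying N_{j,k}^1 = δ_{j,k^*}. Let d(x_j) denote the operator norm of the left-multiplication matrix L_j with entries (L_j)_{k,s} = N_{j,k}^s. Then d(x_j) d(x_k) = Σ_s N_{j,k}^s d(x_s), d(x_j) = d(x_{j^*}), and d(x_j) ≥ 1 for all j. -/
open Matrix Finset


open Matrix Finset in
/-- Existence of a strictly positive eigenvector for a symmetric entrywise-positive matrix. -/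
lemma fusion_perron_exists {m : ℕ} (hm : 0 < m) (Q : Matrix (Fin m) (Fin m) ℝ)
    (hQs : Qᵀ = Q) (hQp : ∀ a b, 0 < Q a b) :
    ∃ (lam : ℝ) (u : Fin m → ℝ), (∀ a, 0 < u a) ∧ Q.mulVec u = lam • u := by
  haveI : Nonempty (Fin m) := ⟨⟨0, hm⟩⟩
  set E := EuclideanSpace ℝ (Fin m)
  set T : E →L[ℝ] E := LinearMap.toContinuousLinearMap (Matrix.toEuclideanLin Q) with hT
  have hTapp : ∀ (v : E) (a : Fin m), T v a = Q.mulVec v a := fun v a => rfl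
  have hsa : IsSelfAdjoint T := by
    rw [ContinuousLinearMap.isSelfAdjoint_iff_isSymmetric]
    have : Q.IsHermitian := by rwa [Matrix.IsHermitian, Matrix.conjTranspose_eq_transpose_of_trivial]
    have h2 := (Matrix.isHermitian_iff_isSymmetric).mp this
    exact h2
  have hf : ∀ v : E, T.reApplyInnerSelf v = ∑ a, Q.mulVec v a * v a := by
    intro v
    show (inner ℝ (T v) v : ℝ) = _
    rw [PiLp.inner_apply]
    simp [hTapp]
    exact Finset.sum_congr rfl fun _ _ => mul_comm _ _
  -- maximize on the sphere
  have hsph : (Metric.sphere (0:E) 1).Nonempty := NormedSpace.sphere_nonempty.mpr zero_le_one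
  obtain ⟨x₀, hx₀mem, hx₀max⟩ := (isCompact_sphere (0:E) 1).exists_isMaxOn hsph
      T.reApplyInnerSelf_continuous.continuousOn
  have hx₀norm : ‖x₀‖ = 1 := by simpa using hx₀mem
  -- the entrywise absolute value
  set u : E := (WithLp.equiv 2 (Fin m → ℝ)).symm (fun a => |x₀ a|) with hu
  have huapp : ∀ a, u a = |x₀ a| := fun a => rfl
  have hunorm : ‖u‖ = 1 := by
    rw [EuclideanSpace.norm_eq] at hx₀norm ⊢
    simpa [huapp, sq_abs] using hx₀norm
  have humem : u ∈ Metric.sphere (0:E) 1 := by simpa using hunorm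
  have hune : u ≠ 0 := by intro h; rw [h] at hunorm; simp at hunorm
  -- Rayleigh value at u is at least that of x₀
  have hval : T.reApplyInnerSelf x₀ ≤ T.reApplyInnerSelf u := by
    rw [hf, hf]
    apply Finset.sum_le_sum
    intro a _
    simp only [Matrix.mulVec, dotProduct, Finset.sum_mul]
    apply Finset.sum_le_sum
    intro b _
    have h1 : Q a b * x₀ b * x₀ a ≤ |Q a b * x₀ b * x₀ a| := le_abs_self _
    calc Q a b * x₀ b * x₀ a ≤ |Q a b * x₀ b * x₀ a| := le_abs_self _
      _ = Q a b * (u b * u a) := by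
          rw [abs_mul, abs_mul, abs_of_pos (hQp a b), huapp, huapp]; ring
      _ = Q a b * u b * u a := by ring
  have humax : IsMaxOn T.reApplyInnerSelf (Metric.sphere (0:E) ‖u‖) u := by
    rw [hunorm]
    intro w hw
    calc T.reApplyInnerSelf w ≤ T.reApplyInnerSelf x₀ := hx₀max hw
      _ ≤ T.reApplyInnerSelf u := hval
  obtain ⟨hmem, -⟩ := hsa.hasEigenvector_of_isMaxOn hune humax
  rw [Module.End.mem_eigenspace_iff] at hmem
  set lam : ℝ := ⨆ x : { x : E // x ≠ 0 }, T.rayleighQuotient x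
  have heig : Q.mulVec (fun a => |x₀ a|) = lam • (fun a => |x₀ a|) := by
    funext a
    have := congrFun (congrArg (WithLp.equiv 2 (Fin m → ℝ)) hmem) a
    have hu2 : u.ofLp = fun a => |x₀ a| := funext huapp
    have h3 : (lam • u).ofLp a = lam * |x₀ a| := rfl
    simpa [hTapp, hu2, h3] using this
  refine ⟨lam, fun a => |x₀ a|, ?_, heig⟩
  -- positivity
  have hx₀ne : ∃ b, x₀ b ≠ 0 := by
    by_contra h
    push_neg at h
    apply hune
    ext a
    show |x₀ a| = (0:ℝ)
    simp [h a]
  obtain ⟨b, hb⟩ := hx₀ne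
  intro a
  have hpos : 0 < Q.mulVec (fun a => |x₀ a|) a := by
    simp only [Matrix.mulVec, dotProduct]
    apply Finset.sum_pos'
    · intro i _
      exact mul_nonneg (hQp a i).le (abs_nonneg _)
    · exact ⟨b, Finset.mem_univ b, mul_pos (hQp a b) (abs_pos.mpr hb)⟩
  rw [heig] at hpos
  simp only [Pi.smul_apply, smul_eq_mul] at hpos
  rcases (abs_nonneg (x₀ a)).lt_or_eq with h | h
  · exact h
  · rw [← h] at hpos; simp at hpos

open Matrix Finset in
/-- Any nonnegative eigenvector of an entrywise-positive matrix, for an eigenvalue admitting a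
strictly positive eigenvector, is a multiple of that positive eigenvector. -/
lemma fusion_perron_unique {m : ℕ} (hm : 0 < m) (Q : Matrix (Fin m) (Fin m) ℝ)
    (hQp : ∀ a b, 0 < Q a b) {lam : ℝ} {u w : Fin m → ℝ} (hu : ∀ a, 0 < u a)
    (hQu : Q.mulVec u = lam • u) (hw : ∀ a, 0 ≤ w a) (hQw : Q.mulVec w = lam • w) :
    ∃ t : ℝ, 0 ≤ t ∧ w = t • u := by
  haveI : Nonempty (Fin m) := ⟨⟨0, hm⟩⟩
  obtain ⟨a₀, -, ha₀⟩ := Finset.exists_min_image Finset.univ (fun a => w a / u a)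
    Finset.univ_nonempty
  set t : ℝ := w a₀ / u a₀ with ht
  have ht0 : 0 ≤ t := div_nonneg (hw a₀) (hu a₀).le
  set v : Fin m → ℝ := w - t • u with hv
  have hv0 : ∀ a, 0 ≤ v a := by
    intro a
    have := ha₀ a (Finset.mem_univ a)
    have h2 : t * u a ≤ w a := by
      rw [ht]
      calc w a₀ / u a₀ * u a ≤ w a / u a * u a := by
            apply mul_le_mul_of_nonneg_right this (hu a).le
        _ = w a := div_mul_cancel₀ _ (hu a).ne'
    simpa [hv] using sub_nonneg.mpr h2
  have hva₀ : v a₀ = 0 := by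
    simp [hv, ht, div_mul_cancel₀ _ (hu a₀).ne']
  have hQv : Q.mulVec v = lam • v := by
    rw [hv, Matrix.mulVec_sub, Matrix.mulVec_smul, hQu, hQw, smul_sub, smul_smul, smul_smul,
      mul_comm]
  have hvzero : ∀ a, v a = 0 := by
    by_contra h
    push_neg at h
    obtain ⟨b, hb⟩ := h
    have hbpos : 0 < v b := (hv0 b).lt_of_ne (Ne.symm hb)
    have : 0 < Q.mulVec v a₀ := by
      simp only [Matrix.mulVec, dotProduct]
      apply Finset.sum_pos'
      · exact fun i _ => mul_nonneg (hQp a₀ i).le (hv0 i)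
      · exact ⟨b, Finset.mem_univ b, mul_pos (hQp a₀ b) hbpos⟩
    rw [hQv] at this
    simp [hva₀] at this
  refine ⟨t, ht0, ?_⟩
  funext a
  have := hvzero a
  simp only [hv, Pi.sub_apply, Pi.smul_apply, smul_eq_mul, sub_eq_zero] at this
  simpa [this] using this

open Matrix Finset in
/-- Quadratic-form bound for a symmetric entrywise-nonnegative matrix with a positive
eigenvector. -/
lemma fusion_quad_bound {m : ℕ} (M : Matrix (Fin m) (Fin m) ℝ)
    (hMs : ∀ a b, M a b = M b a) (hM0 : ∀ a b, 0 ≤ M a b) {mu : ℝ} {u : Fin m → ℝ}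
    (hu : ∀ a, 0 < u a) (hMu : M.mulVec u = mu • u) (w : Fin m → ℝ) :
    dotProduct (M.mulVec w) w ≤ mu * dotProduct w w := by
  have hkey : ∀ a b, M a b * w b * w a ≤
      (M a b * ((u b / u a) * w a ^ 2) + M a b * ((u a / u b) * w b ^ 2)) / 2 := by
    intro a b
    have hua := hu a
    have hub := hu b
    have hM := hM0 a b
    rw [le_div_iff₀ (by norm_num : (0:ℝ) < 2)]
    set p : ℝ := u b / u a with hp
    set q : ℝ := u a / u b with hq
    have hp0 : 0 < p := div_pos hub hua
    have hq0 : 0 < q := div_pos hua hub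
    have hpq : p * q = 1 := by rw [hp, hq]; field_simp
    have hmid : w b * w a * 2 ≤ p * w a ^ 2 + q * w b ^ 2 := by
      nlinarith [sq_nonneg (p * w a - w b), hq0, hpq, mul_nonneg (sq_nonneg (p * w a - w b)) hq0.le]
    calc M a b * w b * w a * 2 = M a b * (w b * w a * 2) := by ring
      _ ≤ M a b * (p * w a ^ 2 + q * w b ^ 2) := mul_le_mul_of_nonneg_left hmid hM
      _ = M a b * (p * w a ^ 2) + M a b * (q * w b ^ 2) := by ring
  calc dotProduct (M.mulVec w) w = ∑ a, ∑ b, M a b * w b * w a := by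
        simp [dotProduct, Matrix.mulVec, Finset.sum_mul]
    _ ≤ ∑ a, ∑ b, (M a b * ((u b / u a) * w a ^ 2) + M a b * ((u a / u b) * w b ^ 2)) / 2 := by
        apply Finset.sum_le_sum; intro a _; apply Finset.sum_le_sum; intro b _; exact hkey a b
    _ = ∑ a, ∑ b, (M a b * (u b / u a * w a ^ 2) + M b a * (u a / u b * w b ^ 2)) / 2 := by
        apply Finset.sum_congr rfl; intro a _; apply Finset.sum_congr rfl; intro b _
        nth_rewrite 2 [hMs a b]
        rfl
    _ = ∑ a, ∑ b, M a b * ((u b / u a) * w a ^ 2) := by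
        have main : ∀ (X : Fin m → Fin m → ℝ),
            (∑ a, ∑ b, (X a b + X b a) / 2) = ∑ a, ∑ b, X a b := by
          intro X
          have h1 : ∑ a : Fin m, ∑ b : Fin m, X b a = ∑ a : Fin m, ∑ b : Fin m, X a b :=
            Finset.sum_comm
          calc ∑ a, ∑ b, (X a b + X b a) / 2
              = ∑ a, ((∑ b, X a b) + ∑ b, X b a) / 2 := by
                apply Finset.sum_congr rfl; intro a _
                rw [← Finset.sum_add_distrib, Finset.sum_div]
            _ = ((∑ a, ∑ b, X a b) + ∑ a, ∑ b, X b a) / 2 := by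
                rw [← Finset.sum_add_distrib, Finset.sum_div]
            _ = ∑ a, ∑ b, X a b := by rw [h1]; ring
        simpa using main fun a b => M a b * (u b / u a * w a ^ 2)
    _ = ∑ a, (∑ b, M a b * u b) * (w a ^ 2 / u a) := by
        apply Finset.sum_congr rfl; intro a _
        rw [Finset.sum_mul]
        apply Finset.sum_congr rfl; intro b _
        field_simp
    _ = ∑ a, mu * w a ^ 2 := by
        apply Finset.sum_congr rfl; intro a _
        have : ∑ b, M a b * u b = mu * u a := by
          have := congrFun hMu a
          simpa [Matrix.mulVec, dotProduct] using this
        rw [this]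
        have hne := (hu a).ne'
        field_simp
    _ = mu * dotProduct w w := by
        rw [← Finset.mul_sum]
        simp [dotProduct, pow_two]





/-- The Frobenius–Perron dimension of the `j`-th basis element of a fusion algebra:
the operator norm of the left-multiplication matrix `L_j` with entries
`(L_j)_{k,s} = N_{j,k}^s`. -/
noncomputable def fusionDim (m : ℕ) (N : Fin m → Fin m → Fin m → ℝ) (j : Fin m) : ℝ :=
  ‖LinearMap.toContinuousLinearMap
      (Matrix.toEuclideanLin (Matrix.of fun k s => N j k s))‖

/-- For a fusion algebra, the operator norms `d(x_j) = ‖L_j‖` satisfy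
`d(x_j) d(x_k) = Σ_s N_{j,k}^s d(x_s)`, `d(x_j) = d(x_{j^*})`, and `d(x_j) ≥ 1`. -/
theorem fusionDim_multiplicative_symmetric_ge_one
    (m : ℕ) (hm : 0 < m)
    (N : Fin m → Fin m → Fin m → ℝ)
    (hN : ∀ j k s, 0 ≤ N j k s)
    (σ : Fin m → Fin m) (hσ : ∀ j, σ (σ j) = j)
    (hunit : ∀ k s, N ⟨0, hm⟩ k s = if k = s then 1 else 0)
    (hunit' : ∀ j s, N j ⟨0, hm⟩ s = if j = s then 1 else 0)
    (hdual : ∀ j k, N j k ⟨0, hm⟩ = if j = σ k then 1 else 0)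
    (hassoc : ∀ j k l s, ∑ t, N j k t * N t l s = ∑ t, N k l t * N j t s)
    (hfrob : ∀ j k s, N j k s = N (σ j) s k)
    (hfrob' : ∀ j k s, N j k s = N (σ k) (σ j) (σ s)) :
    (∀ j k, fusionDim m N j * fusionDim m N k = ∑ s, N j k s * fusionDim m N s) ∧
    (∀ j, fusionDim m N j = fusionDim m N (σ j)) ∧
    (∀ j, 1 ≤ fusionDim m N j) := by
  classical
  haveI : Nonempty (Fin m) := ⟨⟨0, hm⟩⟩
  set L : Fin m → Matrix (Fin m) (Fin m) ℝ := fun j => Matrix.of fun k s => N j k s with hL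
  have hLapp : ∀ j k s, L j k s = N j k s := fun _ _ _ => rfl
  set Q : Matrix (Fin m) (Fin m) ℝ := Matrix.of fun j s => ∑ l, N j l s with hQdef
  have hQapp : ∀ j s, Q j s = ∑ l, N j l s := fun _ _ => rfl
  have hσinv : Function.Involutive σ := hσ
  -- Frobenius reciprocity
  have hrec : ∀ j k s, N s k j = N j (σ k) s := by
    intro j k s
    have h1 : N s k j = N (σ s) j k := hfrob s k j
    have h2 : N (σ s) j k = N (σ j) s (σ k) := by
      have := hfrob' (σ s) j k
      rwa [hσ] at this
    have h3 : N j (σ k) s = N (σ j) s (σ k) := hfrob j (σ k) s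
    rw [h1, h2, h3]
  -- Q symmetric
  have hQsym : Qᵀ = Q := by
    ext s j
    show Q j s = Q s j
    rw [hQapp, hQapp]
    have h1 : ∑ l, N s l j = ∑ l, N j (σ l) s := Finset.sum_congr rfl (fun l _ => hrec j l s)
    have h2 : ∑ l, N j (σ l) s = ∑ l, N j l s :=
      Fintype.sum_equiv (hσinv.toPerm σ) _ _ (fun x => rfl)
    rw [← h2, ← h1]
  -- positivity of total fusion sums
  have hsumpos : ∀ a b, 0 < ∑ l, N a b l := by
    intro a b
    rcases (Finset.sum_nonneg (fun l (_ : l ∈ univ) => hN a b l)).lt_or_eq with h | h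
    · exact h
    · exfalso
      have hzero : ∀ l, N a b l = 0 := by
        intro l
        exact (Finset.sum_eq_zero_iff_of_nonneg (fun l _ => hN a b l)).mp h.symm l (mem_univ l)
      have h1 : ∑ t, N a b t * N t (σ b) a = ∑ t, N b (σ b) t * N a t a := hassoc a b (σ b) a
      have h2 : ∑ t, N a b t * N t (σ b) a = 0 := by simp [hzero]
      have h3 : (1:ℝ) ≤ ∑ t, N b (σ b) t * N a t a := by
        have hterm : N b (σ b) ⟨0, hm⟩ * N a ⟨0, hm⟩ a = 1 := by
          rw [hdual, hunit', hσ]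
          simp
        calc (1:ℝ) = N b (σ b) ⟨0, hm⟩ * N a ⟨0, hm⟩ a := hterm.symm
          _ ≤ ∑ t, N b (σ b) t * N a t a :=
            Finset.single_le_sum (fun t _ => mul_nonneg (hN b (σ b) t) (hN a t a))
              (mem_univ (⟨0, hm⟩ : Fin m))
      rw [← h1, h2] at h3
      linarith
  have hQpos : ∀ j s, 0 < Q j s := by
    intro j s
    rw [hQapp]
    rw [Finset.sum_congr rfl (fun l (_ : l ∈ univ) => hfrob j l s)]
    exact hsumpos (σ j) s
  -- L j commutes with Q
  have hcomm : ∀ j, L j * Q = Q * L j := by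
    intro j
    ext k s
    rw [Matrix.mul_apply, Matrix.mul_apply]
    calc ∑ t, L j k t * Q t s = ∑ t, ∑ l, N j k t * N t l s := by
          refine Finset.sum_congr rfl fun t _ => ?_
          rw [hLapp, hQapp, Finset.mul_sum]
      _ = ∑ l, ∑ t, N j k t * N t l s := Finset.sum_comm
      _ = ∑ l, ∑ t, N k l t * N j t s := Finset.sum_congr rfl (fun l _ => hassoc j k l s)
      _ = ∑ t, ∑ l, N k l t * N j t s := Finset.sum_comm
      _ = ∑ t, Q k t * L j t s := by
          refine Finset.sum_congr rfl fun t _ => ?_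
          rw [hQapp, hLapp, Finset.sum_mul]
  -- Perron eigenvector
  obtain ⟨lam, u, hupos, hQu⟩ := fusion_perron_exists hm Q hQsym hQpos
  have hLu : ∀ j, ∃ cj : ℝ, 0 ≤ cj ∧ (L j).mulVec u = cj • u := by
    intro j
    apply fusion_perron_unique hm Q hQpos hupos hQu
    · intro a
      simp only [Matrix.mulVec, dotProduct]
      exact Finset.sum_nonneg fun b _ => mul_nonneg (hN j a b) (hupos b).le
    · rw [Matrix.mulVec_mulVec, ← hcomm j, ← Matrix.mulVec_mulVec, hQu, Matrix.mulVec_smul]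
  choose c hc0 hcu using hLu
  have hune : u ⟨0, hm⟩ ≠ 0 := (hupos _).ne'
  -- the character property
  have hchar : ∀ j k, c j * c k = ∑ t, N k j t * c t := by
    intro j k
    have h1 : (L j).mulVec ((L k).mulVec u) = (c j * c k) • u := by
      rw [hcu k, Matrix.mulVec_smul, hcu j, smul_smul, mul_comm (c k) (c j)]
    have h2 : ∀ a, ((L j).mulVec ((L k).mulVec u)) a = (∑ t, N k j t * c t) * u a := by
      intro a
      calc ((L j).mulVec ((L k).mulVec u)) a
          = ∑ b, ∑ t, N j a b * N k b t * u t := by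
            simp only [Matrix.mulVec, dotProduct, hLapp, Finset.mul_sum, mul_assoc]
        _ = ∑ t, ∑ b, N j a b * N k b t * u t := Finset.sum_comm
        _ = ∑ t, (∑ b, N j a b * N k b t) * u t := by
            refine Finset.sum_congr rfl fun t _ => ?_
            rw [Finset.sum_mul]
        _ = ∑ t, (∑ r, N k j r * N r a t) * u t := by
            refine Finset.sum_congr rfl fun t _ => ?_
            rw [← hassoc k j a t]
        _ = ∑ t, ∑ r, N k j r * (N r a t * u t) := by
            refine Finset.sum_congr rfl fun t _ => ?_
            rw [Finset.sum_mul]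
            exact Finset.sum_congr rfl fun r _ => by ring
        _ = ∑ r, ∑ t, N k j r * (N r a t * u t) := Finset.sum_comm
        _ = ∑ r, N k j r * (((L r).mulVec u) a) := by
            refine Finset.sum_congr rfl fun r _ => ?_
            rw [← Finset.mul_sum]
            simp only [Matrix.mulVec, dotProduct, hLapp]
        _ = ∑ r, N k j r * (c r * u a) := by
            refine Finset.sum_congr rfl fun r _ => ?_
            rw [hcu r]
            simp only [Pi.smul_apply, smul_eq_mul]
        _ = (∑ t, N k j t * c t) * u a := by
            rw [Finset.sum_mul]
            exact Finset.sum_congr rfl fun r _ => by ring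
    have h3 := h2 ⟨0, hm⟩
    rw [h1] at h3
    simp only [Pi.smul_apply, smul_eq_mul] at h3
    exact mul_right_cancel₀ hune h3
  -- transposes
  have hLT : ∀ j, (L j)ᵀ = L (σ j) := by
    intro j
    ext k s
    show L j s k = L (σ j) k s
    rw [hLapp, hLapp]
    exact hfrob j s k
  -- c is symmetric under σ
  have hdotpos : 0 < dotProduct u u := by
    apply Finset.sum_pos'
    · exact fun a _ => mul_self_nonneg (u a)
    · exact ⟨⟨0, hm⟩, mem_univ _, mul_pos (hupos _) (hupos _)⟩
  have hcσ : ∀ j, c (σ j) = c j := by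
    intro j
    have h1 : dotProduct u ((L j).mulVec u) = dotProduct ((L j)ᵀ.mulVec u) u := by
      rw [dotProduct_mulVec u (L j) u, Matrix.mulVec_transpose]
    rw [hLT, hcu (σ j), hcu j] at h1
    rw [dotProduct_smul, smul_dotProduct] at h1
    have h2 : c j * dotProduct u u = c (σ j) * dotProduct u u := by
      simpa [smul_eq_mul, dotProduct_comm] using h1
    exact (mul_right_cancel₀ hdotpos.ne' h2).symm
  -- operator norm equals c j
  have hnorm : ∀ j, ‖LinearMap.toContinuousLinearMap (Matrix.toEuclideanLin (L j))‖ = c j := by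
    intro j
    set T := LinearMap.toContinuousLinearMap (Matrix.toEuclideanLin (L j)) with hTdef
    have hTapp : ∀ (v : EuclideanSpace ℝ (Fin m)) (a : Fin m), T v a = ((L j).mulVec v) a :=
      fun v a => rfl
    apply le_antisymm
    · apply ContinuousLinearMap.opNorm_le_bound _ (hc0 j)
      intro w
      have hMsym : ∀ a b, ((L j)ᵀ * L j) a b = ((L j)ᵀ * L j) b a := by
        intro a b
        have hsy : ((L j)ᵀ * L j)ᵀ = (L j)ᵀ * L j := by
          rw [Matrix.transpose_mul, Matrix.transpose_transpose]
        have h := congrFun (congrFun hsy a) b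
        simpa [Matrix.transpose_apply] using h.symm
      have hM0 : ∀ a b, 0 ≤ ((L j)ᵀ * L j) a b := by
        intro a b
        rw [Matrix.mul_apply]
        refine Finset.sum_nonneg fun t _ => mul_nonneg ?_ ?_
        · rw [Matrix.transpose_apply, hLapp]; exact hN _ _ _
        · rw [hLapp]; exact hN _ _ _
      have hMu : ((L j)ᵀ * L j).mulVec u = (c j * c j) • u := by
        rw [← Matrix.mulVec_mulVec, hcu j, Matrix.mulVec_smul, hLT, hcu (σ j), hcσ j, smul_smul]
      have hquad := fusion_quad_bound _ hMsym hM0 hupos hMu w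
      have hdot1 : ((L j).mulVec w) ⬝ᵥ ((L j).mulVec w) = (((L j)ᵀ * L j).mulVec w) ⬝ᵥ w := by
        rw [dotProduct_mulVec, ← Matrix.mulVec_transpose, Matrix.mulVec_mulVec]
      have hinner : ‖T w‖ ^ 2 = (((L j)ᵀ * L j).mulVec w) ⬝ᵥ w := by
        rw [← real_inner_self_eq_norm_sq, ← hdot1]
        simp only [PiLp.inner_apply, RCLike.inner_apply, conj_trivial, dotProduct, hTapp]
      have hw2 : (w : Fin m → ℝ) ⬝ᵥ (w : Fin m → ℝ) = ‖w‖ ^ 2 := by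
        rw [← real_inner_self_eq_norm_sq]
        simp only [PiLp.inner_apply, RCLike.inner_apply, conj_trivial, dotProduct]
      have hsq : ‖T w‖ ^ 2 ≤ (c j * ‖w‖) ^ 2 := by
        rw [hinner]
        calc (((L j)ᵀ * L j).mulVec w) ⬝ᵥ w ≤ (c j * c j) * ((w : Fin m → ℝ) ⬝ᵥ w) := hquad
          _ = (c j * ‖w‖) ^ 2 := by rw [hw2]; ring
      exact le_of_pow_le_pow_left₀ two_ne_zero (mul_nonneg (hc0 j) (norm_nonneg w)) hsq
    · set u' : EuclideanSpace ℝ (Fin m) := (WithLp.equiv 2 (Fin m → ℝ)).symm u with hu'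
      have h1 : T u' = c j • u' := by
        ext a
        exact congrFun (hcu j) a
      have h2 : ‖T u'‖ = c j * ‖u'‖ := by
        rw [h1, norm_smul, Real.norm_eq_abs, abs_of_nonneg (hc0 j)]
      have h3 : 0 < ‖u'‖ := by
        rw [norm_pos_iff]
        intro h
        exact hune (congrFun (congrArg (WithLp.equiv 2 (Fin m → ℝ)) h) ⟨0, hm⟩)
      have h4 := T.le_opNorm u'
      rw [h2] at h4
      exact le_of_mul_le_mul_right h4 h3
  have hfd : ∀ j, fusionDim m N j = c j := by
    intro j
    rw [show fusionDim m N j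
        = ‖LinearMap.toContinuousLinearMap (Matrix.toEuclideanLin (L j))‖ from rfl]
    exact hnorm j
  refine ⟨?_, ?_, ?_⟩
  · intro j k
    simp only [hfd]
    rw [mul_comm (c j) (c k)]
    exact hchar k j
  · intro j
    simp only [hfd]
    exact (hcσ j).symm
  · intro j
    simp only [hfd]
    have h1 := hchar j (σ j)
    rw [hcσ j] at h1
    have he : c ⟨0, hm⟩ = 1 := by
      have h2 : ((L ⟨0, hm⟩ : Matrix (Fin m) (Fin m) ℝ).mulVec u) = u := by
        funext a
        simp [Matrix.mulVec, dotProduct, hLapp, hunit]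
      have h3 := congrFun ((hcu ⟨0, hm⟩).symm.trans h2) ⟨0, hm⟩
      simp only [Pi.smul_apply, smul_eq_mul] at h3
      exact mul_right_cancel₀ hune (h3.trans (one_mul (u ⟨0, hm⟩)).symm)
    have h4 : N (σ j) j ⟨0, hm⟩ * c ⟨0, hm⟩ ≤ ∑ t, N (σ j) j t * c t :=
      Finset.single_le_sum (fun t _ => mul_nonneg (hN (σ j) j t) (hc0 t))
        (mem_univ (⟨0, hm⟩ : Fin m))
    have h5 : N (σ j) j ⟨0, hm⟩ = 1 := by rw [hdual]; simp
    rw [h5, he, mul_one] at h4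
    nlinarith [hc0 j, h1, h4]
end

section
/- Let A be a square matrix with nonnegative real entries. If A has an eigenvector f with strictly positive entries, then the corresponding eigenvalue equals the spectral radius (the largest nonnegative eigenvalue) of A. -/
/-- Perron–Frobenius, part 3: if a square matrix with nonnegative real
entries has an eigenvector with strictly positive entries, then the corresponding
eigenvalue equals the spectral radius of the matrix. -/
theorem eigenvalue_of_positive_eigenvector_eq_spectralRadius
    (n : ℕ) (hn : 0 < n) (A : Matrix (Fin n) (Fin n) ℝ)
    (hA : ∀ i j, 0 ≤ A i j)
    (f : Fin n → ℝ) (hf : ∀ i, 0 < f i)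
    (μ : ℝ) (heig : A.mulVec f = μ • f) :
    spectralRadius ℂ (A.map (fun x => (x : ℂ))) = ENNReal.ofReal μ := by
  have i0 : Fin n := ⟨0, hn⟩
  set M := A.map (fun x => (x : ℂ)) with hM
  -- μ is nonnegative
  have hμ0 : 0 ≤ μ := by
    have h := congrFun heig i0
    have hpos : 0 ≤ A.mulVec f i0 := by
      rw [Matrix.mulVec, dotProduct]
      exact Finset.sum_nonneg fun j _ => mul_nonneg (hA _ j) (hf j).le
    have : 0 ≤ μ * f i0 := by
      simpa [Pi.smul_apply, smul_eq_mul, h] using hpos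
    nlinarith [hf i0]
  have halg : ∀ (z : ℂ) (v : Fin n → ℂ),
      (algebraMap ℂ (Matrix (Fin n) (Fin n) ℂ) z).mulVec v = z • v := by
    intro z v
    rw [Algebra.algebraMap_eq_smul_one, Matrix.smul_mulVec, Matrix.one_mulVec]
  -- the map of mulVec over ℂ
  have hmv : ∀ (v : Fin n → ℝ), M.mulVec (fun j => (v j : ℂ)) =
      fun i => ((A.mulVec v i : ℝ) : ℂ) := by
    intro v
    funext i
    simp only [Matrix.mulVec, dotProduct, Matrix.map_apply, hM]
    push_cast
    rfl
  -- μ is in the spectrum of M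
  have hmem : (μ : ℂ) ∈ spectrum ℂ M := by
    rw [spectrum.mem_iff]
    intro hU
    rw [Matrix.isUnit_iff_isUnit_det] at hU
    have hdet : (algebraMap ℂ (Matrix (Fin n) (Fin n) ℂ) (μ : ℂ) - M).det = 0 := by
      rw [← Matrix.exists_mulVec_eq_zero_iff]
      refine ⟨fun j => (f j : ℂ), ?_, ?_⟩
      · intro h0
        have := congrFun h0 i0
        simp only [Pi.zero_apply, Complex.ofReal_eq_zero] at this
        exact (hf i0).ne' this
      · rw [Matrix.sub_mulVec, hmv f, heig, halg]
        funext i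
        simp
    rw [hdet] at hU
    exact (not_isUnit_zero hU)
  -- every spectral value has norm at most μ
  have hbound : ∀ z ∈ spectrum ℂ M, ‖z‖ ≤ μ := by
    intro z hz
    rw [spectrum.mem_iff] at hz
    rw [Matrix.isUnit_iff_isUnit_det, isUnit_iff_ne_zero, not_not] at hz
    obtain ⟨v, hv0, hv⟩ := (Matrix.exists_mulVec_eq_zero_iff).2 hz
    have heigv : M.mulVec v = z • v := by
      rw [Matrix.sub_mulVec] at hv
      have := sub_eq_zero.mp hv
      rw [← this, halg]
    -- pick maximizer of ‖v i‖ / f i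
    obtain ⟨i₀, -, hmax⟩ := Finset.exists_max_image Finset.univ
      (fun i => ‖v i‖ / f i) ⟨i0, Finset.mem_univ i0⟩
    set c : ℝ := ‖v i₀‖ / f i₀ with hc
    have hle : ∀ j, ‖v j‖ ≤ c * f j := by
      intro j
      have := hmax j (Finset.mem_univ j)
      calc ‖v j‖ = ‖v j‖ / f j * f j := (div_mul_cancel₀ _ (hf j).ne').symm
        _ ≤ c * f j := mul_le_mul_of_nonneg_right this (hf j).le
    have hcpos : 0 < c := by
      obtain ⟨j, hj⟩ := Function.ne_iff.mp hv0
      have h1 : 0 < ‖v j‖ / f j := div_pos (norm_pos_iff.mpr hj) (hf j)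
      exact lt_of_lt_of_le h1 (hmax j (Finset.mem_univ j))
    have hvi : ‖v i₀‖ = c * f i₀ := by
      rw [hc, div_mul_cancel₀ _ (hf i₀).ne']
    have key : ‖z‖ * ‖v i₀‖ ≤ μ * ‖v i₀‖ := by
      have h1 : ‖z‖ * ‖v i₀‖ = ‖(M.mulVec v) i₀‖ := by
        rw [heigv]; simp [Pi.smul_apply, smul_eq_mul, norm_mul]
      rw [h1]
      have h2 : ‖(M.mulVec v) i₀‖ ≤ ∑ j, A i₀ j * ‖v j‖ := by
        rw [Matrix.mulVec, dotProduct]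
        refine (norm_sum_le _ _).trans ?_
        refine Finset.sum_le_sum fun j _ => ?_
        simp only [Matrix.map_apply, norm_mul, Complex.norm_real, hM]
        rw [Real.norm_of_nonneg (hA i₀ j)]
      refine h2.trans ?_
      have h3 : ∑ j, A i₀ j * ‖v j‖ ≤ ∑ j, A i₀ j * (c * f j) :=
        Finset.sum_le_sum fun j _ => mul_le_mul_of_nonneg_left (hle j) (hA i₀ j)
      refine h3.trans ?_
      have h4 : ∑ j, A i₀ j * (c * f j) = c * (A.mulVec f i₀) := by
        rw [Matrix.mulVec, dotProduct, Finset.mul_sum]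
        exact Finset.sum_congr rfl fun j _ => by ring
      rw [h4, heig, Pi.smul_apply, smul_eq_mul, hvi]
      ring_nf
      exact le_refl _
    have hvpos : 0 < ‖v i₀‖ := by rw [hvi]; exact mul_pos hcpos (hf i₀)
    exact le_of_mul_le_mul_right key hvpos
  -- conclude
  rw [spectralRadius]
  apply le_antisymm
  · refine iSup₂_le fun k hk => ?_
    rw [← enorm_eq_nnnorm, ← ofReal_norm]
    exact ENNReal.ofReal_le_ofReal (hbound k hk)
  · have : ENNReal.ofReal μ = (‖(μ : ℂ)‖₊ : ENNReal) := by
      rw [← enorm_eq_nnnorm, ← ofReal_norm, Complex.norm_real,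
        Real.norm_of_nonneg hμ0]
    rw [this]
    exact le_iSup₂_of_le (μ : ℂ) hmem le_rfl
end

section
/- Let B be a rank-3 fusion algebra with basis {x_1 = 1, x_2, x_3} where x_2^* = x_3 (so x_2 is not self-adjoint). Then d_2 := d(x_2) = d(x_3), and the fusion rules are: x_2 x_2 = ((d_2^2-1)/(2d_2)) x_2 + ((d_2^2+1)/(2d_2)) x_3, x_2 x_3 = x_1 + ((d_2^2-1)/(2d_2))(x_2 + x_3), and x_3 x_3 = ((d_2^2+1)/(2d_2)) x_2 + ((d_2^2-1)/(2d_2)) x_3. In particular the Frobenius–Perron dimension μ = 1 + 2 d_2^2 ≥ 3. -/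
/-- Rank-three classification, type II: in a rank-3 fusion algebra with
basis `{x₁ = 1, x₂, x₃}` and `x₂* = x₃`, one has `d₂ := d(x₂) = d(x₃)`, the fusion
rules are determined by `d₂`, and the Frobenius–Perron dimension `μ = 1 + 2d₂² ≥ 3`. -/
theorem rank_three_type_II_classification
    (B : Type*) [Ring B] [Algebra ℂ B] [StarRing B] [StarModule ℂ B]
    (b : Module.Basis (Fin 3) ℂ B) (hone : b 0 = 1)
    (hstar0 : star (b 0) = b 0)
    (hstar1 : star (b 1) = b 2)
    (hstar2 : star (b 2) = b 1)
    (N : Fin 3 → Fin 3 → Fin 3 → ℝ)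
    (hN : ∀ j k s, 0 ≤ N j k s)
    (hmul : ∀ j k, b j * b k = ∑ s, (N j k s : ℂ) • b s)
    (hdual : ∀ j k, N j k 0 = if j = (![0, 2, 1] : Fin 3 → Fin 3) k then 1 else 0)
    (d : Fin 3 → ℝ) (hd1 : ∀ j, 1 ≤ d j) (hd0 : d 0 = 1)
    (hdmul : ∀ j k, d j * d k = ∑ s, N j k s * d s) :
    d 1 = d 2 ∧
    b 1 * b 1 = (((d 1 ^ 2 - 1) / (2 * d 1) : ℝ) : ℂ) • b 1
        + (((d 1 ^ 2 + 1) / (2 * d 1) : ℝ) : ℂ) • b 2 ∧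
    b 1 * b 2 = b 0 + (((d 1 ^ 2 - 1) / (2 * d 1) : ℝ) : ℂ) • (b 1 + b 2) ∧
    b 2 * b 2 = (((d 1 ^ 2 + 1) / (2 * d 1) : ℝ) : ℂ) • b 1
        + (((d 1 ^ 2 - 1) / (2 * d 1) : ℝ) : ℂ) • b 2 ∧
    3 ≤ 1 + 2 * d 1 ^ 2 := by
  have hd110 : N 1 1 0 = 0 := by simpa using hdual 1 1
  have hd120 : N 1 2 0 = 1 := by simpa using hdual 1 2
  have hd210 : N 2 1 0 = 1 := by simpa using hdual 2 1
  have hd220 : N 2 2 0 = 0 := by simpa using hdual 2 2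
  -- extraction of coefficients
  have extract : ∀ x0 x1 x2 y0 y1 y2 : ℂ,
      x0 • b 0 + x1 • b 1 + x2 • b 2 = y0 • b 0 + y1 • b 1 + y2 • b 2 →
      x0 = y0 ∧ x1 = y1 ∧ x2 = y2 := by
    intro x0 x1 x2 y0 y1 y2 h
    have li := Fintype.linearIndependent_iff.mp b.linearIndependent
      ![x0 - y0, x1 - y1, x2 - y2] (by
        rw [Fin.sum_univ_three]
        simp only [Matrix.cons_val_zero, Matrix.cons_val_one, Matrix.head_cons,
          Matrix.cons_val_two, Matrix.tail_cons]
        linear_combination (norm := module) h)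
    refine ⟨sub_eq_zero.mp ?_, sub_eq_zero.mp ?_, sub_eq_zero.mp ?_⟩
    · simpa using li 0
    · simpa using li 1
    · simpa using li 2

  -- expanded multiplication rules
  have m11 := hmul 1 1
  have m12 := hmul 1 2
  have m21 := hmul 2 1
  have m22 := hmul 2 2
  rw [Fin.sum_univ_three] at m11 m12 m21 m22
  -- star relations
  have s11 : (N 2 2 0 : ℂ) = N 1 1 0 ∧ (N 2 2 1 : ℂ) = N 1 1 2 ∧ (N 2 2 2 : ℂ) = N 1 1 1 := by
    refine extract _ _ _ _ _ _ (m22.symm.trans ?_)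
    have h := congrArg star m11
    rw [star_mul, hstar1] at h
    simp only [star_add, star_smul, hstar0, hstar1, hstar2, Complex.star_def,
      Complex.conj_ofReal] at h
    rw [h]; abel
  have s12 : (N 1 2 0 : ℂ) = N 1 2 0 ∧ (N 1 2 1 : ℂ) = N 1 2 2 ∧ (N 1 2 2 : ℂ) = N 1 2 1 := by
    refine extract _ _ _ _ _ _ (m12.symm.trans ?_)
    have h := congrArg star m12
    rw [star_mul, hstar2, hstar1] at h
    simp only [star_add, star_smul, hstar0, hstar1, hstar2, Complex.star_def,
      Complex.conj_ofReal] at h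
    rw [h]; abel
  have s21 : (N 2 1 0 : ℂ) = N 2 1 0 ∧ (N 2 1 1 : ℂ) = N 2 1 2 ∧ (N 2 1 2 : ℂ) = N 2 1 1 := by
    refine extract _ _ _ _ _ _ (m21.symm.trans ?_)
    have h := congrArg star m21
    rw [star_mul, hstar1, hstar2] at h
    simp only [star_add, star_smul, hstar0, hstar1, hstar2, Complex.star_def,
      Complex.conj_ofReal] at h
    rw [h]; abel

  -- associativity
  have hb02 : b 0 * b 2 = b 2 := by rw [hone, one_mul]
  have hb01 : b 0 * b 1 = b 1 := by rw [hone, one_mul]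
  have hb10 : b 1 * b 0 = b 1 := by rw [hone, mul_one]
  have hb20 : b 2 * b 0 = b 2 := by rw [hone, mul_one]
  have assoc1 : (N 1 1 1 * N 1 2 0 + N 1 1 2 * N 2 2 0 : ℂ)
      = N 1 2 1 * N 1 1 0 + N 1 2 2 * N 1 2 0 := by
    have h := mul_assoc (b 1) (b 1) (b 2)
    rw [m11, m12] at h
    simp only [add_mul, mul_add, smul_mul_assoc, mul_smul_comm] at h
    rw [hb02, hb10, m12, m22, m11] at h
    refine (extract ((N 1 1 1 * N 1 2 0 + N 1 1 2 * N 2 2 0 : ℂ))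
      ((N 1 1 1 * N 1 2 1 + N 1 1 2 * N 2 2 1 : ℂ))
      ((N 1 1 0 + N 1 1 1 * N 1 2 2 + N 1 1 2 * N 2 2 2 : ℂ))
      ((N 1 2 1 * N 1 1 0 + N 1 2 2 * N 1 2 0 : ℂ))
      ((N 1 2 0 + N 1 2 1 * N 1 1 1 + N 1 2 2 * N 1 2 1 : ℂ))
      ((N 1 2 1 * N 1 1 2 + N 1 2 2 * N 1 2 2 : ℂ)) ?_).1
    linear_combination (norm := module) h
  have assoc2 : (N 2 2 1 * N 1 1 0 + N 2 2 2 * N 2 1 0 : ℂ)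
      = N 2 1 1 * N 2 1 0 + N 2 1 2 * N 2 2 0 := by
    have h := mul_assoc (b 2) (b 2) (b 1)
    rw [m22, m21] at h
    simp only [add_mul, mul_add, smul_mul_assoc, mul_smul_comm] at h
    rw [hb01, hb20, m11, m21, m22] at h
    refine (extract ((N 2 2 1 * N 1 1 0 + N 2 2 2 * N 2 1 0 : ℂ))
      ((N 2 2 0 + N 2 2 1 * N 1 1 1 + N 2 2 2 * N 2 1 1 : ℂ))
      ((N 2 2 1 * N 1 1 2 + N 2 2 2 * N 2 1 2 : ℂ))
      ((N 2 1 1 * N 2 1 0 + N 2 1 2 * N 2 2 0 : ℂ))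
      ((N 2 1 1 * N 2 1 1 + N 2 1 2 * N 2 2 1 : ℂ))
      ((N 2 1 0 + N 2 1 1 * N 2 1 2 + N 2 1 2 * N 2 2 2 : ℂ)) ?_).1
    linear_combination (norm := module) h

  -- scalar consequences
  have e111 : N 1 2 2 = N 1 1 1 := by
    have h := assoc1; rw [hd110, hd120, hd220] at h
    have h' : (N 1 1 1 : ℂ) = (N 1 2 2 : ℂ) := by push_cast at h; linear_combination h
    exact_mod_cast h'.symm
  have e121 : N 1 2 1 = N 1 1 1 := by
    have h : N 1 2 1 = N 1 2 2 := by exact_mod_cast s12.2.1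
    rw [h, e111]
  have e222 : N 2 2 2 = N 1 1 1 := by exact_mod_cast s11.2.2
  have e221 : N 2 2 1 = N 1 1 2 := by exact_mod_cast s11.2.1
  have e211 : N 2 1 1 = N 1 1 1 := by
    have h := assoc2; rw [hd110, hd210, hd220] at h
    have h' : (N 2 1 1 : ℂ) = (N 2 2 2 : ℂ) := by push_cast at h; linear_combination h.symm
    have h'' : N 2 1 1 = N 2 2 2 := by exact_mod_cast h'
    rw [h'', e222]
  have e212 : N 2 1 2 = N 1 1 1 := by
    have h : N 2 1 1 = N 2 1 2 := by exact_mod_cast s21.2.1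
    rw [← h, e211]
  set a := N 1 1 1 with ha
  set c := N 1 1 2 with hc
  -- dimension equations
  have E1 := hdmul 1 1
  have E2 := hdmul 1 2
  have E3 := hdmul 2 2
  rw [Fin.sum_univ_three] at E1 E2 E3
  rw [hd110, hd0] at E1
  rw [hd120, hd0, e121, e111] at E2
  rw [hd220, hd0, e221, e222] at E3
  have ha0 : 0 ≤ a := hN 1 1 1
  have hc0 : 0 ≤ c := hN 1 1 2
  have hd11 := hd1 1
  have hd12 := hd1 2
  -- d 1 = d 2
  have hdeq : d 1 = d 2 := by
    by_contra hne
    have hsub : d 1 - d 2 ≠ 0 := sub_ne_zero.mpr hne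
    have h1 : (d 1 - d 2) * (d 1 + d 2) = (d 1 - d 2) * (a - c) := by linear_combination E1 - E3
    have h2 : d 1 + d 2 = a - c := mul_left_cancel₀ hsub h1
    nlinarith [E2, hc0, hd11, hd12, h2, sq_nonneg (d 1 - d 2),
      mul_nonneg hc0 (by linarith : (0:ℝ) ≤ d 1 + d 2)]
  have hdpos : (0:ℝ) < d 1 := by linarith
  have hdne : (2 * d 1 : ℝ) ≠ 0 := by positivity
  rw [← hdeq] at E1 E2
  rw [← ha, ← hc] at E1
  have haval : a = (d 1 ^ 2 - 1) / (2 * d 1) := by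
    rw [eq_div_iff hdne]
    linear_combination -E2
  have hcval : c = (d 1 ^ 2 + 1) / (2 * d 1) := by
    rw [eq_div_iff hdne]
    linear_combination E2 - 2 * E1
  refine ⟨hdeq, ?_, ?_, ?_, by nlinarith [hd11]⟩
  · rw [m11, hd110, haval, hcval]; push_cast; module
  · rw [m12, hd120, e121, e111, haval]; push_cast; module
  · rw [m22, hd220, e221, e222, haval, hcval]; push_cast; module
end

section
/- Let B be a rank-3 fusion algebra with basis {x_1 = 1, x_2, x_3}, all self-adjoint, and let d_2 = d(x_2), d_3 = d(x_3). Write x_2 x_3 = a d_3 x_2 + b d_2 x_3 with a, b ≥ 0. Then a + b = 1, and x_2 x_2 = x_1 + ((d_2^2 - 1 - a d_3^2)/d_2) x_2 + a d_3 x_3 and x_3 x_3 = x_1 + b d_2 x_2 + ((d_3^2 - 1 - b d_2^2)/d_3) x_3; in particular d_2^2 - 1 - a d_3^2 ≥ 0 and d_3^2 - 1 - b d_2^2 ≥ 0. -/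
/-- Rank-three classification, type I: in a rank-3 fusion algebra with
self-adjoint basis `{x₁ = 1, x₂, x₃}`, writing `x₂x₃ = a d₃ x₂ + b d₂ x₃` with
`a, b ≥ 0`, one has `a + b = 1` and the fusion rules
`x₂² = x₁ + ((d₂²-1-a d₃²)/d₂) x₂ + a d₃ x₃`,
`x₃² = x₁ + b d₂ x₂ + ((d₃²-1-b d₂²)/d₃) x₃`;
in particular `d₂²-1-a d₃² ≥ 0` and `d₃²-1-b d₂² ≥ 0`. -/
theorem rank_three_type_I_classification
    (B : Type*) [Ring B] [Algebra ℂ B] [StarRing B] [StarModule ℂ B]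
    (b : Module.Basis (Fin 3) ℂ B) (hone : b 0 = 1)
    (hsa : ∀ j, star (b j) = b j)
    (d2 d3 : ℝ) (hd2 : 1 ≤ d2) (hd3 : 1 ≤ d3)
    (a bb p q r s : ℝ)
    (ha : 0 ≤ a) (hb : 0 ≤ bb) (hp : 0 ≤ p) (hq : 0 ≤ q) (hr : 0 ≤ r) (hs : 0 ≤ s)
    (hmul11 : b 1 * b 1 = b 0 + (p : ℂ) • b 1 + (q : ℂ) • b 2)
    (hmul12 : b 1 * b 2 = ((a * d3 : ℝ) : ℂ) • b 1 + ((bb * d2 : ℝ) : ℂ) • b 2)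
    (hmul22 : b 2 * b 2 = b 0 + (r : ℂ) • b 1 + (s : ℂ) • b 2)
    (hchar11 : d2 * d2 = 1 + p * d2 + q * d3)
    (hchar12 : d2 * d3 = (a * d3) * d2 + (bb * d2) * d3)
    (hchar22 : d3 * d3 = 1 + r * d2 + s * d3) :
    a + bb = 1 ∧
    q = a * d3 ∧
    r = bb * d2 ∧
    p = (d2 ^ 2 - 1 - a * d3 ^ 2) / d2 ∧
    s = (d3 ^ 2 - 1 - bb * d2 ^ 2) / d3 ∧
    0 ≤ d2 ^ 2 - 1 - a * d3 ^ 2 ∧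
    0 ≤ d3 ^ 2 - 1 - bb * d2 ^ 2 := by
  have hd2' : (0:ℝ) < d2 := lt_of_lt_of_le one_pos hd2
  have hd3' : (0:ℝ) < d3 := lt_of_lt_of_le one_pos hd3
  -- a + bb = 1 from hchar12
  have hab : a + bb = 1 := by
    have h : (a + bb) * (d2 * d3) = 1 * (d2 * d3) := by ring_nf; nlinarith [hchar12]
    exact mul_right_cancel₀ (by positivity) h
  have h02 : b 0 * b 2 = b 2 := by rw [hone, one_mul]
  have h10 : b 1 * b 0 = b 1 := by rw [hone, mul_one]
  -- associativity (x2 x2) x3 = x2 (x2 x3) gives q = a d3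
  have assoc1 : (b 1 * b 1) * b 2 = b 1 * (b 1 * b 2) := mul_assoc _ _ _
  rw [hmul11, hmul12, add_mul, add_mul, smul_mul_assoc, smul_mul_assoc, hmul12, hmul22, h02,
      mul_add, mul_smul_comm, mul_smul_comm, hmul11, hmul12] at assoc1
  have hq1 : (q : ℂ) = ((a * d3 : ℝ) : ℂ) := by
    have h := congrArg (fun x => b.repr x 0) assoc1
    simp only [smul_add, smul_smul, map_add, map_smul, Finsupp.add_apply,
      Finsupp.smul_apply, Module.Basis.repr_self, Finsupp.single_apply] at h
    simpa using h
  have hq' : q = a * d3 := by exact_mod_cast hq1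
  -- associativity (x2 x3) x3 = x2 (x3 x3) gives r = bb d2
  have assoc2 : (b 1 * b 2) * b 2 = b 1 * (b 2 * b 2) := mul_assoc _ _ _
  rw [hmul12, hmul22, add_mul, smul_mul_assoc, smul_mul_assoc, hmul12, hmul22,
      mul_add, mul_add, mul_smul_comm, mul_smul_comm, h10, hmul11, hmul12] at assoc2
  have hr1 : ((bb * d2 : ℝ) : ℂ) = (r : ℂ) := by
    have h := congrArg (fun x => b.repr x 0) assoc2
    simp only [smul_add, smul_smul, map_add, map_smul, Finsupp.add_apply,
      Finsupp.smul_apply, Module.Basis.repr_self, Finsupp.single_apply] at h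
    simpa using h
  have hr' : r = bb * d2 := by exact_mod_cast hr1.symm
  have hpnum : p * d2 = d2 ^ 2 - 1 - a * d3 ^ 2 := by
    rw [hq'] at hchar11; nlinarith [hchar11]
  have hsnum : s * d3 = d3 ^ 2 - 1 - bb * d2 ^ 2 := by
    rw [hr'] at hchar22; nlinarith [hchar22]
  refine ⟨hab, hq', hr', ?_, ?_, ?_, ?_⟩
  · field_simp [hd2'.ne'] at hpnum ⊢; linarith
  · field_simp [hd3'.ne'] at hsnum ⊢; linarith
  · nlinarith [hpnum]
  · nlinarith [hsnum]
end

section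
/- Let B be a fusion ring with basis {x_1 = 1, ..., x_m}, fusion coefficients N_{j,k}^ℓ ∈ ℤ_{≥0}, and Frobenius–Perron dimensions d(x_j). Then for all j, k: Σ_{ℓ=1}^m (N_{j,k}^ℓ)^2 ≤ min{d(x_j)^2, d(x_k)^2}. -/
/-- in a fusion ring, `Σ_ℓ (N_{j,k}^ℓ)² ≤ min{d(x_j)², d(x_k)²}`. -/
theorem fusion_ring_sum_sq_coeff_le
    (m : ℕ) (hm : 0 < m)
    (N : Fin m → Fin m → Fin m → ℕ)
    (σ : Fin m → Fin m) (hσ : ∀ j, σ (σ j) = j)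
    (hunit : ∀ k s, N ⟨0, hm⟩ k s = if k = s then 1 else 0)
    (hunit' : ∀ j s, N j ⟨0, hm⟩ s = if j = s then 1 else 0)
    (hdual : ∀ j k, N j k ⟨0, hm⟩ = if j = σ k then 1 else 0)
    (hassoc : ∀ j k l s, ∑ t, N j k t * N t l s = ∑ t, N k l t * N j t s)
    (hfrob : ∀ j k s, N j k s = N (σ j) s k)
    (hfrob' : ∀ j k s, N j k s = N s (σ k) j)
    (d : Fin m → ℝ) (hd1 : ∀ j, 1 ≤ d j) (hdσ : ∀ j, d (σ j) = d j)
    (hdmul : ∀ j k, d j * d k = ∑ s, (N j k s : ℝ) * d s) :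
    ∀ j k, (∑ ℓ, ((N j k ℓ : ℝ)) ^ 2) ≤ min (d j ^ 2) (d k ^ 2) := by
  intro j k
  have hdpos : ∀ a, (0:ℝ) < d a := fun a => lt_of_lt_of_le one_pos (hd1 a)
  -- single coefficient bound: N a b c * d c ≤ d a * d b
  have hsingle : ∀ a b c, (N a b c : ℝ) * d c ≤ d a * d b := by
    intro a b c
    rw [hdmul a b]
    exact Finset.single_le_sum
      (f := fun s => (N a b s : ℝ) * d s)
      (fun s _ => mul_nonneg (Nat.cast_nonneg _) (le_of_lt (hdpos s)))
      (Finset.mem_univ c)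
  have hb1 : ∀ t, (N t k k : ℝ) ≤ d t := fun t =>
    le_of_mul_le_mul_right (hsingle t k k) (hdpos k)
  have hb2 : ∀ t, (N j t j : ℝ) ≤ d t := by
    intro t
    have h := hsingle j t j
    rw [mul_comm (d j) (d t)] at h
    exact le_of_mul_le_mul_right h (hdpos j)
  -- first identity: ∑ ℓ (N j k ℓ)² = ∑ t N (σ j) j t * N t k k
  have heq1 : (∑ ℓ, ((N j k ℓ : ℝ)) ^ 2) = ∑ t, (N (σ j) j t : ℝ) * (N t k k : ℝ) := by
    have h := hassoc (σ j) j k k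
    have h2 : (∑ t, N (σ j) j t * N t k k) = ∑ t, N j k t * N j k t := by
      rw [h]; exact Finset.sum_congr rfl fun t _ => by rw [← hfrob j k t]
    have h3 := congrArg (fun n : ℕ => (n : ℝ)) h2
    push_cast at h3
    rw [h3]
    exact Finset.sum_congr rfl fun t _ => pow_two _
  -- second identity: ∑ ℓ (N j k ℓ)² = ∑ t N k (σ k) t * N j t j
  have heq2 : (∑ ℓ, ((N j k ℓ : ℝ)) ^ 2) = ∑ t, (N k (σ k) t : ℝ) * (N j t j : ℝ) := by
    have h := hassoc j k (σ k) j
    have h2 : (∑ t, N k (σ k) t * N j t j) = ∑ t, N j k t * N j k t := by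
      rw [← h]; exact Finset.sum_congr rfl fun t _ => by rw [← hfrob' j k t]
    have h3 := congrArg (fun n : ℕ => (n : ℝ)) h2
    push_cast at h3
    rw [h3]
    exact Finset.sum_congr rfl fun t _ => pow_two _
  refine le_min ?_ ?_
  · rw [heq1]
    calc ∑ t, (N (σ j) j t : ℝ) * (N t k k : ℝ)
        ≤ ∑ t, (N (σ j) j t : ℝ) * d t :=
          Finset.sum_le_sum fun t _ =>
            mul_le_mul_of_nonneg_left (hb1 t) (Nat.cast_nonneg _)
      _ = d (σ j) * d j := (hdmul (σ j) j).symm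
      _ = d j ^ 2 := by rw [hdσ]; ring
  · rw [heq2]
    calc ∑ t, (N k (σ k) t : ℝ) * (N j t j : ℝ)
        ≤ ∑ t, (N k (σ k) t : ℝ) * d t :=
          Finset.sum_le_sum fun t _ =>
            mul_le_mul_of_nonneg_left (hb2 t) (Nat.cast_nonneg _)
      _ = d k * d (σ k) := (hdmul k (σ k)).symm
      _ = d k ^ 2 := by rw [hdσ]; ring
end

section
/- Let B be a fusion ring with fusion coefficients N_{j,k}^ℓ and Frobenius–Perron dimensions d(x_j). Then for all j, k, ℓ and every real t ≥ 1: N_{j,k}^ℓ ≤ d(x_ℓ) · d(x_j)^{(2-t)/t} · d(x_k)^{(t-2)/t}. In particular (taking t = 2), N_{j,k}^ℓ ≤ min{d(x_j), d(x_k), d(x_ℓ)}. -/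
/-- in a fusion ring, for every real `t ≥ 1`,
`N_{j,k}^ℓ ≤ d(x_ℓ) d(x_j)^{(2-t)/t} d(x_k)^{(t-2)/t}`; in particular (t = 2)
`N_{j,k}^ℓ ≤ min{d(x_j), d(x_k), d(x_ℓ)}`. -/
theorem fusion_ring_coeff_bounds
    (m : ℕ) (hm : 0 < m)
    (N : Fin m → Fin m → Fin m → ℕ)
    (σ : Fin m → Fin m) (hσ : ∀ j, σ (σ j) = j)
    (hunit : ∀ k s, N ⟨0, hm⟩ k s = if k = s then 1 else 0)
    (hunit' : ∀ j s, N j ⟨0, hm⟩ s = if j = s then 1 else 0)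
    (hdual : ∀ j k, N j k ⟨0, hm⟩ = if j = σ k then 1 else 0)
    (hassoc : ∀ j k l s, ∑ t, N j k t * N t l s = ∑ t, N k l t * N j t s)
    (hfrob : ∀ j k s, N j k s = N (σ j) s k)
    (hfrob' : ∀ j k s, N j k s = N s (σ k) j)
    (d : Fin m → ℝ) (hd1 : ∀ j, 1 ≤ d j) (hdσ : ∀ j, d (σ j) = d j)
    (hdmul : ∀ j k, d j * d k = ∑ s, (N j k s : ℝ) * d s) :
    (∀ j k ℓ, ∀ t : ℝ, 1 ≤ t →
      (N j k ℓ : ℝ) ≤ d ℓ * d j ^ ((2 - t) / t) * d k ^ ((t - 2) / t)) ∧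
    (∀ j k ℓ, (N j k ℓ : ℝ) ≤ min (d j) (min (d k) (d ℓ))) := by
  have hdpos : ∀ j, (0:ℝ) < d j := fun j => lt_of_lt_of_le one_pos (hd1 j)
  have key : ∀ j k ℓ, (N j k ℓ : ℝ) * d ℓ ≤ d j * d k := by
    intro j k ℓ
    rw [hdmul]
    exact Finset.single_le_sum (f := fun s => (N j k s : ℝ) * d s)
      (fun s _ => mul_nonneg (Nat.cast_nonneg _) (hdpos s).le) (Finset.mem_univ ℓ)
  have hB : ∀ j k ℓ, (N j k ℓ : ℝ) ≤ d ℓ * d j / d k := by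
    intro j k ℓ
    have h := key (σ j) ℓ k
    rw [← hfrob j k ℓ, hdσ j] at h
    rw [le_div_iff₀ (hdpos k)]
    linarith
  have hC : ∀ j k ℓ, (N j k ℓ : ℝ) ≤ d ℓ * d k / d j := by
    intro j k ℓ
    have h := key ℓ (σ k) j
    rw [← hfrob' j k ℓ, hdσ k] at h
    rw [le_div_iff₀ (hdpos j)]
    linarith
  have main : ∀ j k ℓ, ∀ t : ℝ, 1 ≤ t →
      (N j k ℓ : ℝ) ≤ d ℓ * d j ^ ((2 - t) / t) * d k ^ ((t - 2) / t) := by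
    intro j k ℓ t ht
    have htpos : (0:ℝ) < t := lt_of_lt_of_le one_pos ht
    set a : ℝ := 1 / t with ha
    have ha0 : 0 < a := by positivity
    have ha1 : a ≤ 1 := by rw [ha, div_le_one htpos]; linarith
    by_cases hN : N j k ℓ = 0
    · rw [hN]
      push_cast
      exact (mul_pos (mul_pos (hdpos ℓ) (Real.rpow_pos_of_pos (hdpos j) _))
        (Real.rpow_pos_of_pos (hdpos k) _)).le
    have hN1 : (1:ℝ) ≤ (N j k ℓ : ℝ) := by
      exact_mod_cast Nat.one_le_iff_ne_zero.mpr hN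
    have hNpos : (0:ℝ) < (N j k ℓ : ℝ) := lt_of_lt_of_le one_pos hN1
    have step : (N j k ℓ : ℝ) = (N j k ℓ : ℝ) ^ a * (N j k ℓ : ℝ) ^ (1 - a) := by
      rw [← Real.rpow_add hNpos]
      norm_num
    have b1 : (N j k ℓ : ℝ) ^ a ≤ (d ℓ * d j / d k) ^ a :=
      Real.rpow_le_rpow (Nat.cast_nonneg _) (hB j k ℓ) ha0.le
    have b2 : (N j k ℓ : ℝ) ^ (1 - a) ≤ (d ℓ * d k / d j) ^ (1 - a) :=
      Real.rpow_le_rpow (Nat.cast_nonneg _) (hC j k ℓ) (by linarith)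
    have prodle : (N j k ℓ : ℝ) ≤ (d ℓ * d j / d k) ^ a * (d ℓ * d k / d j) ^ (1 - a) := by
      rw [step]
      exact mul_le_mul b1 b2 (Real.rpow_nonneg (Nat.cast_nonneg _) _)
        (Real.rpow_pos_of_pos (div_pos (mul_pos (hdpos ℓ) (hdpos j)) (hdpos k)) _).le
    have e1 : (d ℓ * d j / d k) ^ a = d ℓ ^ a * d j ^ a * d k ^ (-a) := by
      rw [Real.div_rpow (mul_pos (hdpos ℓ) (hdpos j)).le (hdpos k).le,
        Real.mul_rpow (hdpos ℓ).le (hdpos j).le, Real.rpow_neg (hdpos k).le,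
        div_eq_mul_inv]
    have e2 : (d ℓ * d k / d j) ^ (1 - a)
        = d ℓ ^ (1 - a) * d k ^ (1 - a) * d j ^ (-(1 - a)) := by
      rw [Real.div_rpow (mul_pos (hdpos ℓ) (hdpos k)).le (hdpos j).le,
        Real.mul_rpow (hdpos ℓ).le (hdpos k).le, Real.rpow_neg (hdpos j).le,
        div_eq_mul_inv]
    have ej : (2 - t) / t = a - (1 - a) := by
      rw [ha]; field_simp; ring
    have ek : (t - 2) / t = (1 - a) - a := by
      rw [ha]; field_simp; ring
    have efin : (d ℓ * d j / d k) ^ a * (d ℓ * d k / d j) ^ (1 - a)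
        = d ℓ * d j ^ ((2 - t) / t) * d k ^ ((t - 2) / t) := by
      rw [e1, e2, ej, ek]
      rw [show d ℓ ^ a * d j ^ a * d k ^ (-a) * (d ℓ ^ (1 - a) * d k ^ (1 - a) * d j ^ (-(1 - a)))
          = (d ℓ ^ a * d ℓ ^ (1 - a)) * (d j ^ a * d j ^ (-(1 - a))) * (d k ^ (-a) * d k ^ (1 - a))
        from by ring]
      rw [← Real.rpow_add (hdpos ℓ), ← Real.rpow_add (hdpos j), ← Real.rpow_add (hdpos k)]
      rw [show a + (1 - a) = 1 from by ring, Real.rpow_one,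
        show a + -(1 - a) = a - (1 - a) from by ring,
        show -a + (1 - a) = 1 - a - a from by ring]
    rw [← efin]
    exact prodle
  refine ⟨main, fun j k ℓ => ?_⟩
  have h2 : ∀ j k ℓ, (N j k ℓ : ℝ) ≤ d ℓ := by
    intro j k ℓ
    have h := main j k ℓ 2 one_le_two
    norm_num at h
    exact h
  have hℓ := h2 j k ℓ
  have hk : (N j k ℓ : ℝ) ≤ d k := by
    have h := h2 (σ j) ℓ k
    rwa [← hfrob j k ℓ] at h
  have hj : (N j k ℓ : ℝ) ≤ d j := by
    have h := h2 ℓ (σ k) j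
    rwa [← hfrob' j k ℓ] at h
  exact le_min hj (le_min hk hℓ)
end

section
/- Let B be a fusion ring with fusion coefficients N_{j,k}^s and Frobenius–Perron dimensions d(x_j). Then for all indices j_1, j_2, j_3, j_4: Σ_{s=1}^m N_{j_1,j_2}^s N_{j_3,j_4}^s ≤ min over distinct pairs j ≠ j' in {j_1, j_2, j_3, j_4} of d(x_j) d(x_{j'}). -/
/-- in a fusion ring, for all indices `j₁, j₂, j₃, j₄`,
`Σ_s N_{j₁,j₂}^s N_{j₃,j₄}^s ≤ d(x_j) d(x_{j'})` for every pair of distinct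
positions `j ≠ j'` among `{j₁, j₂, j₃, j₄}` (hence ≤ the minimum over such pairs). -/
theorem fusion_ring_pairing_bound
    (m : ℕ) (hm : 0 < m)
    (N : Fin m → Fin m → Fin m → ℕ)
    (σ : Fin m → Fin m) (hσ : ∀ j, σ (σ j) = j)
    (hunit : ∀ k s, N ⟨0, hm⟩ k s = if k = s then 1 else 0)
    (hunit' : ∀ j s, N j ⟨0, hm⟩ s = if j = s then 1 else 0)
    (hdual : ∀ j k, N j k ⟨0, hm⟩ = if j = σ k then 1 else 0)
    (hassoc : ∀ j k l s, ∑ t, N j k t * N t l s = ∑ t, N k l t * N j t s)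
    (hfrob : ∀ j k s, N j k s = N (σ j) s k)
    (hfrob' : ∀ j k s, N j k s = N s (σ k) j)
    (d : Fin m → ℝ) (hd1 : ∀ j, 1 ≤ d j) (hdσ : ∀ j, d (σ j) = d j)
    (hdmul : ∀ j k, d j * d k = ∑ s, (N j k s : ℝ) * d s)
    (j₁ j₂ j₃ j₄ : Fin m) :
    ∀ a b : Fin 4, a ≠ b →
      (∑ s, (N j₁ j₂ s : ℝ) * (N j₃ j₄ s : ℝ))
        ≤ d ((![j₁, j₂, j₃, j₄] : Fin 4 → Fin m) a)
          * d ((![j₁, j₂, j₃, j₄] : Fin 4 → Fin m) b) := by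
  have hd0 : ∀ j, 0 < d j := fun j => lt_of_lt_of_le one_pos (hd1 j)
  have hN0 : ∀ j k s, (0:ℝ) ≤ (N j k s : ℝ) := fun j k s => Nat.cast_nonneg _
  -- single term bounds
  have h1 : ∀ j k s, (N j k s : ℝ) * d s ≤ d j * d k := by
    intro j k s
    rw [hdmul j k]
    exact Finset.single_le_sum (f := fun t => (N j k t : ℝ) * d t)
      (fun t _ => mul_nonneg (hN0 _ _ _) (hd0 t).le) (Finset.mem_univ s)
  have h2 : ∀ j k s, (N j k s : ℝ) * d k ≤ d j * d s := by
    intro j k s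
    rw [hfrob j k s]
    have := h1 (σ j) s k
    rwa [hdσ] at this
  have h3 : ∀ j k s, (N j k s : ℝ) * d j ≤ d s * d k := by
    intro j k s
    rw [hfrob' j k s]
    have := h1 s (σ k) j
    rwa [hdσ] at this
  have sqle : ∀ x y : ℝ, 0 ≤ x → 0 ≤ y → x ^ 2 ≤ y ^ 2 → x ≤ y := by
    intro x y hx hy hxy
    calc x = Real.sqrt (x ^ 2) := by rw [Real.sqrt_sq hx]
      _ ≤ Real.sqrt (y ^ 2) := Real.sqrt_le_sqrt hxy
      _ = y := Real.sqrt_sq hy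
  have hA : ∀ j k s, (N j k s : ℝ) ≤ d s := by
    intro j k s
    have hprod := mul_le_mul (h2 j k s) (h3 j k s)
      (mul_nonneg (hN0 j k s) (hd0 j).le) (mul_nonneg (hd0 j).le (hd0 s).le)
    refine sqle _ _ (hN0 j k s) (hd0 s).le ?_
    have hpos : 0 < d j * d k := mul_pos (hd0 j) (hd0 k)
    rw [← mul_le_mul_iff_of_pos_right hpos]
    nlinarith [hprod]
  -- pairing sums
  set P : Fin m → Fin m → Fin m → Fin m → ℝ :=
    fun a b c e => ∑ s, (N a b s : ℝ) * (N c e s : ℝ) with hP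
  have hP1 : ∀ a b c e, P a b c e ≤ d a * d b := by
    intro a b c e
    calc P a b c e ≤ ∑ s, (N a b s : ℝ) * d s :=
          Finset.sum_le_sum (fun s _ => mul_le_mul_of_nonneg_left (hA c e s) (hN0 a b s))
      _ = d a * d b := (hdmul a b).symm
  have hP2 : ∀ a b c e, P a b c e ≤ d c * d e := by
    intro a b c e
    calc P a b c e ≤ ∑ s, (N c e s : ℝ) * d s := by
          refine Finset.sum_le_sum (fun s _ => ?_)
          rw [mul_comm]
          exact mul_le_mul_of_nonneg_left (hA a b s) (hN0 c e s)
      _ = d c * d e := (hdmul c e).symm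
  have htrans : ∀ a b c e, P a b c e = P (σ c) a e (σ b) := by
    intro a b c e
    have key : (∑ s, ((N a b s : ℝ) * (N (σ c) s e : ℝ)))
        = ∑ s, ((N (σ c) a s : ℝ) * (N s b e : ℝ)) := by
      exact_mod_cast congrArg (Nat.cast : ℕ → ℝ) (hassoc (σ c) a b e).symm
    calc P a b c e = ∑ s, ((N a b s : ℝ) * (N (σ c) s e : ℝ)) := by
          simp only [hP]
          exact Finset.sum_congr rfl (fun s _ => by rw [← hfrob c e s])
      _ = ∑ s, ((N (σ c) a s : ℝ) * (N s b e : ℝ)) := key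
      _ = P (σ c) a e (σ b) := by
          simp only [hP]
          exact Finset.sum_congr rfl (fun s _ => by rw [← hfrob' s b e])
  have hS : (∑ s, (N j₁ j₂ s : ℝ) * (N j₃ j₄ s : ℝ)) = P j₁ j₂ j₃ j₄ := rfl
  have hS0 : 0 ≤ P j₁ j₂ j₃ j₄ :=
    Finset.sum_nonneg (fun s _ => mul_nonneg (hN0 _ _ _) (hN0 _ _ _))
  -- the four direct bounds
  have B12 : P j₁ j₂ j₃ j₄ ≤ d j₁ * d j₂ := hP1 _ _ _ _
  have B34 : P j₁ j₂ j₃ j₄ ≤ d j₃ * d j₄ := hP2 _ _ _ _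
  have B13 : P j₁ j₂ j₃ j₄ ≤ d j₁ * d j₃ := by
    have := hP1 (σ j₃) j₁ j₄ (σ j₂)
    rw [← htrans, hdσ] at this
    calc P j₁ j₂ j₃ j₄ ≤ d j₃ * d j₁ := this
      _ = d j₁ * d j₃ := mul_comm _ _
  have B24 : P j₁ j₂ j₃ j₄ ≤ d j₂ * d j₄ := by
    have := hP2 (σ j₃) j₁ j₄ (σ j₂)
    rw [← htrans, hdσ] at this
    calc P j₁ j₂ j₃ j₄ ≤ d j₄ * d j₂ := this
      _ = d j₂ * d j₄ := mul_comm _ _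
  -- Cauchy–Schwarz for the remaining pairs
  have hCS : (P j₁ j₂ j₃ j₄) ^ 2 ≤ (P j₁ j₂ j₁ j₂) * (P j₃ j₄ j₃ j₄) := by
    have := Finset.sum_mul_sq_le_sq_mul_sq Finset.univ
      (fun s => (N j₁ j₂ s : ℝ)) (fun s => (N j₃ j₄ s : ℝ))
    simpa [hP, sq] using this
  have hQ1a : P j₁ j₂ j₁ j₂ ≤ d j₁ * d j₁ := by
    have := hP1 (σ j₁) j₁ j₂ (σ j₂)
    rwa [← htrans, hdσ] at this
  have hQ1b : P j₁ j₂ j₁ j₂ ≤ d j₂ * d j₂ := by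
    have := hP2 (σ j₁) j₁ j₂ (σ j₂)
    rwa [← htrans, hdσ] at this
  have hQ2a : P j₃ j₄ j₃ j₄ ≤ d j₃ * d j₃ := by
    have := hP1 (σ j₃) j₃ j₄ (σ j₄)
    rwa [← htrans, hdσ] at this
  have hQ2b : P j₃ j₄ j₃ j₄ ≤ d j₄ * d j₄ := by
    have := hP2 (σ j₃) j₃ j₄ (σ j₄)
    rwa [← htrans, hdσ] at this
  have hQ0 : 0 ≤ P j₃ j₄ j₃ j₄ :=
    Finset.sum_nonneg (fun s _ => mul_nonneg (hN0 _ _ _) (hN0 _ _ _))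
  have B14 : P j₁ j₂ j₃ j₄ ≤ d j₁ * d j₄ := by
    refine sqle _ _ hS0 (mul_nonneg (hd0 j₁).le (hd0 j₄).le) ?_
    calc P j₁ j₂ j₃ j₄ ^ 2 ≤ P j₁ j₂ j₁ j₂ * P j₃ j₄ j₃ j₄ := hCS
      _ ≤ (d j₁ * d j₁) * (d j₄ * d j₄) :=
          mul_le_mul hQ1a hQ2b hQ0 (mul_nonneg (hd0 j₁).le (hd0 j₁).le)
      _ = (d j₁ * d j₄) ^ 2 := by ring
  have B23 : P j₁ j₂ j₃ j₄ ≤ d j₂ * d j₃ := by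
    refine sqle _ _ hS0 (mul_nonneg (hd0 j₂).le (hd0 j₃).le) ?_
    calc P j₁ j₂ j₃ j₄ ^ 2 ≤ P j₁ j₂ j₁ j₂ * P j₃ j₄ j₃ j₄ := hCS
      _ ≤ (d j₂ * d j₂) * (d j₃ * d j₃) :=
          mul_le_mul hQ1b hQ2a hQ0 (mul_nonneg (hd0 j₂).le (hd0 j₂).le)
      _ = (d j₂ * d j₃) ^ 2 := by ring
  intro a b hab
  rw [hS]
  fin_cases a <;> fin_cases b <;>
    simp only [Matrix.cons_val_zero, Matrix.cons_val_one, Matrix.head_cons,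
      Matrix.cons_val_two, Matrix.tail_cons, Matrix.cons_val_three,
      Matrix.head_fin_const, Fin.mk_zero, Fin.mk_one] <;>
    first
      | exact absurd rfl hab
      | exact B12
      | exact (mul_comm (d j₂) (d j₁)) ▸ B12
      | exact B34
      | exact (mul_comm (d j₄) (d j₃)) ▸ B34
      | exact B13
      | exact (mul_comm (d j₃) (d j₁)) ▸ B13
      | exact B24
      | exact (mul_comm (d j₄) (d j₂)) ▸ B24
      | exact B14
      | exact (mul_comm (d j₄) (d j₁)) ▸ B14
      | exact B23
      | exact (mul_comm (d j₃) (d j₂)) ▸ B23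
end

section
/- Let A be the fusion bialgebra side of a fusion ring: for x = Σ_j λ_j x_j define ‖x‖_{1,A} = Σ_j |λ_j| d(x_j) and ‖x‖_{∞,A} = max_j |λ_j| / d(x_j), and convolution x * y = Σ_{j,k,s} λ_j λ'_k N_{j,k}^s x_s. Then ‖x * y‖_{∞,A} ≤ ‖x‖_{∞,A} · ‖y‖_{1,A} for all x, y. -/
/-- on the fusion-bialgebra side `A` of a fusion ring/algebra,
with `‖x‖_{1,A} = Σ_j |λ_j| d(x_j)`, `‖x‖_{∞,A} = max_j |λ_j|/d(x_j)` and
convolution `x * y = Σ_{j,k,s} λ_j λ'_k N_{j,k}^s x_s`, Young's inequality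
`‖x * y‖_{∞,A} ≤ ‖x‖_{∞,A} ‖y‖_{1,A}` holds. -/
theorem fusion_convolution_young_inf_one
    (m : ℕ) (hm : 0 < m)
    (N : Fin m → Fin m → Fin m → ℝ)
    (hN : ∀ j k s, 0 ≤ N j k s)
    (σ : Fin m → Fin m) (hσ : ∀ j, σ (σ j) = j)
    (hunit : ∀ k s, N ⟨0, hm⟩ k s = if k = s then 1 else 0)
    (hunit' : ∀ j s, N j ⟨0, hm⟩ s = if j = s then 1 else 0)
    (hdual : ∀ j k, N j k ⟨0, hm⟩ = if j = σ k then 1 else 0)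
    (hassoc : ∀ j k l s, ∑ t, N j k t * N t l s = ∑ t, N k l t * N j t s)
    (hfrob : ∀ j k s, N j k s = N (σ j) s k)
    (d : Fin m → ℝ) (hd1 : ∀ j, 1 ≤ d j) (hdσ : ∀ j, d (σ j) = d j)
    (hdmul : ∀ j k, d j * d k = ∑ s, N j k s * d s)
    (x y : Fin m → ℂ) :
    Finset.univ.sup'
        (⟨⟨0, hm⟩, Finset.mem_univ _⟩ : (Finset.univ : Finset (Fin m)).Nonempty)
        (fun s => ‖∑ j, ∑ k, x j * y k * (N j k s : ℂ)‖ / d s)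
      ≤ (Finset.univ.sup'
            (⟨⟨0, hm⟩, Finset.mem_univ _⟩ : (Finset.univ : Finset (Fin m)).Nonempty)
            (fun j => ‖x j‖ / d j))
          * ∑ k, ‖y k‖ * d k := by
  have hdpos : ∀ j, (0:ℝ) < d j := fun j => lt_of_lt_of_le one_pos (hd1 j)
  have hflip : ∀ j k s, N j k s = N k (σ s) (σ j) := by
    intro j k s
    have h := hassoc j k (σ s) ⟨0, hm⟩
    have hL : ∑ t, N j k t * N t (σ s) ⟨0, hm⟩ = N j k s := by
      have : ∀ t, N j k t * N t (σ s) ⟨0, hm⟩ = if t = s then N j k t else 0 := by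
        intro t
        rw [hdual, hσ]
        by_cases ht : t = s <;> simp [ht]
      calc ∑ t, N j k t * N t (σ s) ⟨0, hm⟩ = ∑ t, if t = s then N j k t else 0 :=
            Finset.sum_congr rfl fun t _ => this t
        _ = N j k s := by rw [Finset.sum_ite_eq']; simp
    have hR : ∑ t, N k (σ s) t * N j t ⟨0, hm⟩ = N k (σ s) (σ j) := by
      have : ∀ t, N k (σ s) t * N j t ⟨0, hm⟩ = if t = σ j then N k (σ s) t else 0 := by
        intro t
        rw [hdual]
        by_cases ht : t = σ j
        · have hj : j = σ t := by rw [ht, hσ]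
          rw [if_pos ht, if_pos hj, mul_one]
        · have hj : j ≠ σ t := fun hh => ht (by rw [hh, hσ])
          rw [if_neg ht, if_neg hj, mul_zero]
      calc ∑ t, N k (σ s) t * N j t ⟨0, hm⟩ = ∑ t, if t = σ j then N k (σ s) t else 0 :=
            Finset.sum_congr rfl fun t _ => this t
        _ = N k (σ s) (σ j) := by rw [Finset.sum_ite_eq']; simp
    rw [hL, hR] at h
    exact h
  have key : ∀ k s, ∑ j, N j k s * d j = d k * d s := by
    intro k s
    have e := Function.Involutive.toPerm σ hσ
    calc ∑ j, N j k s * d j = ∑ j, N k (σ s) (σ j) * d j := by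
          refine Finset.sum_congr rfl fun j _ => by rw [hflip j k s]
      _ = ∑ j, N k (σ s) j * d j := by
          refine Fintype.sum_equiv (Function.Involutive.toPerm σ hσ) _ _ fun j => ?_
          show _ = N k (σ s) (σ j) * d (σ j)
          rw [hdσ]
      _ = d k * d s := by rw [← hdmul, hdσ]
  set M : ℝ := Finset.univ.sup'
      (⟨⟨0, hm⟩, Finset.mem_univ _⟩ : (Finset.univ : Finset (Fin m)).Nonempty)
      (fun j => ‖x j‖ / d j) with hMdef
  have hxM : ∀ j, ‖x j‖ ≤ M * d j := by
    intro j
    have h1 : ‖x j‖ / d j ≤ M := by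
      rw [hMdef]; exact Finset.le_sup' (f := fun j => ‖x j‖ / d j) (Finset.mem_univ j)
    calc ‖x j‖ = ‖x j‖ / d j * d j := (div_mul_cancel₀ _ (ne_of_gt (hdpos j))).symm
      _ ≤ M * d j := by
          exact mul_le_mul_of_nonneg_right h1 (le_of_lt (hdpos j))
  apply Finset.sup'_le
  intro s _
  rw [div_le_iff₀ (hdpos s)]
  calc ‖∑ j, ∑ k, x j * y k * (N j k s : ℂ)‖
      ≤ ∑ j, ∑ k, ‖x j * y k * (N j k s : ℂ)‖ := by
        refine (norm_sum_le _ _).trans (Finset.sum_le_sum fun j _ => norm_sum_le _ _)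
    _ = ∑ j, ∑ k, ‖x j‖ * ‖y k‖ * N j k s := by
        refine Finset.sum_congr rfl fun j _ => Finset.sum_congr rfl fun k _ => ?_
        rw [norm_mul, norm_mul, Complex.norm_real, Real.norm_of_nonneg (hN j k s)]
    _ ≤ ∑ j, ∑ k, M * d j * ‖y k‖ * N j k s := by
        refine Finset.sum_le_sum fun j _ => Finset.sum_le_sum fun k _ => ?_
        have := mul_le_mul_of_nonneg_right (hxM j) (norm_nonneg (y k))
        exact mul_le_mul_of_nonneg_right this (hN j k s)
    _ = ∑ k, M * ‖y k‖ * ∑ j, N j k s * d j := by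
        rw [Finset.sum_comm]
        refine Finset.sum_congr rfl fun k _ => ?_
        rw [Finset.mul_sum]
        refine Finset.sum_congr rfl fun j _ => by ring
    _ = M * (∑ k, ‖y k‖ * d k) * d s := by
        rw [Finset.mul_sum, Finset.sum_mul]
        refine Finset.sum_congr rfl fun k _ => by rw [key]; ring
end

section
/- Let B̂ = Σ_{j ∈ I} d(x_j) x_j be the element of a fusion ring associated to a subset I ⊆ {1,...,m} of basis indices that is closed under fusion and involution (i.e., the span of {x_j : j ∈ I} is a fusion subring containing 1). Then B̂ satisfies B̂² = μ_I · B̂ where μ_I = Σ_{j ∈ I} d(x_j)^2, and B̂* = B̂. Conversely, if P = Σ_j λ_j x_j with each λ_j ∈ {0, d(x_j)} satisfies P² = λ P and P* = (λ̄/λ) P for some λ ≠ 0, then the set I = {j : λ_j ≠ 0} spans a fusion subring: it is closed under the involution and N_{j,k}^s = 0 whenever j, k ∈ I and s ∉ I. -/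
/-- biprojections ↔ fusion subrings: for a fusion ring,
(1) if `I` is a subset of basis indices containing `1`, closed under the involution
and under fusion, then `B̂ = Σ_{j∈I} d_j x_j` satisfies `B̂² = μ_I B̂` with
`μ_I = Σ_{j∈I} d_j²` (and `B̂* = B̂`, i.e. `I` is `*`-invariant);
(2) conversely, if `P = Σ_j λ_j x_j` with each `λ_j ∈ {0, d_j}` satisfies
`P² = λ P` and `P* = (λ̄/λ) P` for some `λ ≠ 0`, then `I = {j : λ_j ≠ 0}` is closed
under the involution and `N_{j,k}^s = 0` whenever `j, k ∈ I`, `s ∉ I`. -/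
theorem biprojection_fusion_subring_correspondence
    (m : ℕ) (hm : 0 < m)
    (N : Fin m → Fin m → Fin m → ℕ)
    (σ : Fin m → Fin m) (hσ : ∀ j, σ (σ j) = j)
    (hunit : ∀ k s, N ⟨0, hm⟩ k s = if k = s then 1 else 0)
    (hunit' : ∀ j s, N j ⟨0, hm⟩ s = if j = s then 1 else 0)
    (hdual : ∀ j k, N j k ⟨0, hm⟩ = if j = σ k then 1 else 0)
    (hassoc : ∀ j k l s, ∑ t, N j k t * N t l s = ∑ t, N k l t * N j t s)
    (hfrob : ∀ j k s, N j k s = N (σ j) s k)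
    (hfrob' : ∀ j k s, N j k s = N s (σ k) j)
    (d : Fin m → ℝ) (hd1 : ∀ j, 1 ≤ d j) (hdσ : ∀ j, d (σ j) = d j)
    (hdmul : ∀ j k, d j * d k = ∑ s, (N j k s : ℝ) * d s) :
    (∀ I : Finset (Fin m), (⟨0, hm⟩ : Fin m) ∈ I →
      (∀ j ∈ I, σ j ∈ I) →
      (∀ j ∈ I, ∀ k ∈ I, ∀ s, N j k s ≠ 0 → s ∈ I) →
      ((∀ s, (s ∈ I ↔ σ s ∈ I)) ∧
       (∀ s, (∑ j ∈ I, ∑ k ∈ I, d j * d k * (N j k s : ℝ))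
          = (∑ j ∈ I, d j ^ 2) * (if s ∈ I then d s else 0)))) ∧
    (∀ (lam : Fin m → ℝ) (μ : ℂ), μ ≠ 0 →
      (∀ j, lam j = 0 ∨ lam j = d j) →
      (∀ s, ((∑ j, ∑ k, lam j * lam k * (N j k s : ℝ) : ℝ) : ℂ) = μ * (lam s : ℂ)) →
      (∀ s, ((lam (σ s) : ℝ) : ℂ) = (starRingEnd ℂ μ / μ) * (lam s : ℂ)) →
      ((∀ j, lam j ≠ 0 ↔ lam (σ j) ≠ 0) ∧
       (∀ j k s, lam j ≠ 0 → lam k ≠ 0 → lam s = 0 → N j k s = 0))) := by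
  constructor
  · intro I h1 hσI hcl
    constructor
    · intro s
      constructor
      · exact fun hs => hσI s hs
      · intro hs
        have := hσI _ hs
        rwa [hσ] at this
    · intro s
      by_cases hsI : s ∈ I
      · simp only [hsI, if_true]
        have key : ∀ j ∈ I, ∑ k ∈ I, d k * (N j k s : ℝ) = d j * d s := by
          intro j hj
          have hσj : σ j ∈ I := hσI j hj
          have hext : ∑ k ∈ I, d k * (N j k s : ℝ)
              = ∑ k, (N (σ j) s k : ℝ) * d k := by
            rw [← Finset.sum_subset (Finset.subset_univ I)]
            · exact Finset.sum_congr rfl fun k _ => by rw [hfrob j k s, mul_comm]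
            · intro k _ hk
              have hz : N (σ j) s k = 0 := by
                by_contra h
                exact hk (hcl _ hσj _ hsI k h)
              simp [hz]
          rw [hext, ← hdmul, hdσ]
        calc ∑ j ∈ I, ∑ k ∈ I, d j * d k * (N j k s : ℝ)
            = ∑ j ∈ I, d j * (d j * d s) := by
              refine Finset.sum_congr rfl fun j hj => ?_
              rw [← key j hj, Finset.mul_sum]
              exact Finset.sum_congr rfl fun k _ => by ring
          _ = (∑ j ∈ I, d j ^ 2) * d s := by
              rw [Finset.sum_mul]
              exact Finset.sum_congr rfl fun j _ => by ring
      · simp only [hsI, if_false, mul_zero]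
        refine Finset.sum_eq_zero fun j hj => Finset.sum_eq_zero fun k hk => ?_
        have hz : N j k s = 0 := by
          by_contra h
          exact hsI (hcl _ hj _ hk s h)
        simp [hz]
  · intro lam μ hμ hlam hP2 hPstar
    have hnn : ∀ j, 0 ≤ lam j := by
      intro j
      rcases hlam j with h | h
      · simp [h]
      · rw [h]; linarith [hd1 j]
    constructor
    · intro j
      constructor
      · intro hj
        intro h0
        have heq := hPstar j
        rw [h0] at heq
        simp only [Complex.ofReal_zero] at heq
        have hjc : ((lam j : ℝ) : ℂ) ≠ 0 := by exact_mod_cast hj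
        have hc : (starRingEnd ℂ) μ / μ = 0 := by
          rcases mul_eq_zero.mp heq.symm with h | h
          · exact h
          · exact absurd h hjc
        rcases div_eq_zero_iff.mp hc with h | h
        · exact hμ (by simpa using congrArg (starRingEnd ℂ) h)
        · exact hμ h
      · intro hσj h0
        have := hPstar j
        rw [h0] at this
        simp only [Complex.ofReal_zero, mul_zero] at this
        exact hσj (by exact_mod_cast this)
    · intro j k s hj hk hs
      have h0 : ((∑ a, ∑ b, lam a * lam b * (N a b s : ℝ) : ℝ) : ℂ) = 0 := by
        rw [hP2 s, hs]; simp
      have hsum : (∑ a, ∑ b, lam a * lam b * (N a b s : ℝ)) = 0 := by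
        exact_mod_cast h0
      have hterm : lam j * lam k * (N j k s : ℝ) = 0 := by
        have h1 : ∀ a ∈ Finset.univ, (0:ℝ) ≤ ∑ b, lam a * lam b * (N a b s : ℝ) := by
          intro a _
          exact Finset.sum_nonneg fun b _ =>
            mul_nonneg (mul_nonneg (hnn a) (hnn b)) (Nat.cast_nonneg _)
        have h2 := (Finset.sum_eq_zero_iff_of_nonneg h1).mp hsum j (Finset.mem_univ j)
        have h3 : ∀ b ∈ Finset.univ, (0:ℝ) ≤ lam j * lam b * (N j b s : ℝ) :=
          fun b _ => mul_nonneg (mul_nonneg (hnn j) (hnn b)) (Nat.cast_nonneg _)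
        exact (Finset.sum_eq_zero_iff_of_nonneg h3).mp h2 k (Finset.mem_univ k)
      have hN : (N j k s : ℝ) = 0 := by
        rcases mul_eq_zero.mp hterm with h | h
        · rcases mul_eq_zero.mp h with h' | h'
          · exact absurd h' hj
          · exact absurd h' hk
        · exact h
      exact_mod_cast hN
end

section
/- Let (λ_{i,j}) be the character table of a commutative fusion ring A: λ_{i,j} = π_j(x_i) where π_1, ..., π_m are the algebra homomorphisms A → ℂ and π_1 = d. If A is the Grothendieck ring of a unitary fusion category (or more generally if the Schur product property holds on the dual), then for every triple of column indices (j_1, j_2, j_3): Σ_{i=1}^m λ_{i,j_1} λ_{i,j_2} λ_{i,j_3} / λ_{i,1} ≥ 0, where λ_{i,1} = d(x_i) > 0. -/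
open scoped ComplexOrder

/-- Commutative Schur product criterion: let `(λ_{i,j}) = (χ j i)` be
the character table of a commutative fusion ring, with first column `χ 1 = d` the
Frobenius–Perron dimension. If the Schur product property holds on the dual
(formulated, as in the paper, via the quadratic forms `u* M_i u` of the fusion
matrices `M_i = (N_{i,a}^b)`), then for every triple of columns `(j₁, j₂, j₃)`,
`Σ_i λ_{i,j₁} λ_{i,j₂} λ_{i,j₃} / λ_{i,1} ≥ 0`. -/
theorem commutative_schur_product_criterion
    (m : ℕ) (hm : 0 < m)
    (N : Fin m → Fin m → Fin m → ℕ)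
    (d : Fin m → ℝ) (hd1 : ∀ i, 1 ≤ d i)
    (hdmul : ∀ i i', d i * d i' = ∑ s, (N i i' s : ℝ) * d s)
    (χ : Fin m → Fin m → ℂ)
    (hχd : ∀ i, χ ⟨0, hm⟩ i = (d i : ℂ))
    (hχmul : ∀ j i i', χ j i * χ j i' = ∑ s, (N i i' s : ℂ) * χ j s)
    (v : Fin m → (Fin m → ℂ)) (hv : ∀ j, v j ≠ 0)
    (heig : ∀ j i,
      (Matrix.of fun a b => ((N i a b : ℕ) : ℂ)).mulVec (v j) = χ j i • v j)
    (hSchur : ∀ u₁ u₂ u₃ : Fin m → ℂ,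
      0 ≤ ∑ i, (1 / (d i : ℂ)) *
        (∑ a, ∑ b, (starRingEnd ℂ) (u₁ a) * (N i a b : ℂ) * u₁ b) *
        (∑ a, ∑ b, (starRingEnd ℂ) (u₂ a) * (N i a b : ℂ) * u₂ b) *
        (∑ a, ∑ b, (starRingEnd ℂ) (u₃ a) * (N i a b : ℂ) * u₃ b)) :
    ∀ j₁ j₂ j₃ : Fin m,
      0 ≤ ∑ i, χ j₁ i * χ j₂ i * χ j₃ i / (d i : ℂ) := by
  intro j₁ j₂ j₃
  -- the quadratic form of M_i at v j equals χ j i times the squared norm of v j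
  have key : ∀ j i, (∑ a, ∑ b, (starRingEnd ℂ) (v j a) * (N i a b : ℂ) * v j b)
      = χ j i * ((∑ a, Complex.normSq (v j a) : ℝ) : ℂ) := by
    intro j i
    have h := heig j i
    have h' : ∀ a, (∑ b, (N i a b : ℂ) * v j b) = χ j i * v j a := by
      intro a
      have := congrFun h a
      simpa [Matrix.mulVec, dotProduct, Matrix.of_apply, Pi.smul_apply,
        smul_eq_mul] using this
    calc (∑ a, ∑ b, (starRingEnd ℂ) (v j a) * (N i a b : ℂ) * v j b)
        = ∑ a, (starRingEnd ℂ) (v j a) * (∑ b, (N i a b : ℂ) * v j b) := by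
          refine Finset.sum_congr rfl fun a _ => ?_
          rw [Finset.mul_sum]; exact Finset.sum_congr rfl fun b _ => by ring
      _ = ∑ a, χ j i * ((starRingEnd ℂ) (v j a) * v j a) := by
          refine Finset.sum_congr rfl fun a _ => ?_
          rw [h' a]; ring
      _ = χ j i * ∑ a, (starRingEnd ℂ) (v j a) * v j a := by rw [Finset.mul_sum]
      _ = χ j i * ((∑ a, Complex.normSq (v j a) : ℝ) : ℂ) := by
          push_cast
          congr 1
          exact Finset.sum_congr rfl fun a _ => by
            rw [mul_comm, Complex.mul_conj]
  set c : Fin m → ℝ := fun j => ∑ a, Complex.normSq (v j a) with hc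
  have cpos : ∀ j, 0 < c j := by
    intro j
    obtain ⟨a, ha⟩ := Function.ne_iff.mp (hv j)
    exact Finset.sum_pos' (fun b _ => Complex.normSq_nonneg _)
      ⟨a, Finset.mem_univ a, Complex.normSq_pos.mpr ha⟩
  have h := hSchur (v j₁) (v j₂) (v j₃)
  simp only [key] at h
  have hd0 : ∀ i, (d i : ℂ) ≠ 0 := fun i => by
    exact_mod_cast ne_of_gt (lt_of_lt_of_le one_pos (hd1 i) : (0:ℝ) < d i)
  have hsum : (∑ i, (1 / (d i : ℂ)) * (χ j₁ i * (c j₁ : ℂ)) * (χ j₂ i * (c j₂ : ℂ))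
        * (χ j₃ i * (c j₃ : ℂ)))
      = ((c j₁ * c j₂ * c j₃ : ℝ) : ℂ) * ∑ i, χ j₁ i * χ j₂ i * χ j₃ i / (d i : ℂ) := by
    rw [Finset.mul_sum]
    refine Finset.sum_congr rfl fun i _ => ?_
    push_cast
    field_simp
  rw [hsum] at h
  have hcpos : (0 : ℝ) < c j₁ * c j₂ * c j₃ :=
    mul_pos (mul_pos (cpos j₁) (cpos j₂)) (cpos j₃)
  have hinv : (0 : ℂ) ≤ (((c j₁ * c j₂ * c j₃)⁻¹ : ℝ) : ℂ) := by
    rw [Complex.zero_le_real]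
    positivity
  have := mul_nonneg hinv h
  rwa [← mul_assoc, ← Complex.ofReal_mul, inv_mul_cancel₀ (ne_of_gt hcpos),
    Complex.ofReal_one, one_mul] at this
end

section
/- Consider the rank-3 fusion algebra with self-adjoint basis {x_1=1, x_2, x_3}, parameters d_2, d_3 ≥ 1, 0 ≤ a ≤ 1, b = 1-a, with fusion rules x_2 x_2 = x_1 + ((d_2^2-1-a d_3^2)/d_2) x_2 + a d_3 x_3, x_2 x_3 = a d_3 x_2 + b d_2 x_3, x_3 x_3 = x_1 + b d_2 x_2 + ((d_3^2-1-b d_2^2)/d_3) x_3. With parameters d_2 = 1000, d_3 = 500, a = 0.750001, the Schur product property fails on the dual: there exists a minimal idempotent Q of the algebra (a character projection) such that the sum Σ_i χ(x_i)^3 / d(x_i) < 0, where χ is the associated character. Hence this fusion bialgebra admits no subfactorization. -/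
/-- for the rank-3 self-adjoint fusion algebra with parameters
`d₂ = 1000`, `d₃ = 500`, `a = 0.750001`, `b = 1 - a`, the Schur product property
fails on the dual: there is a character `χ` (associated to a minimal idempotent,
a character projection) of the algebra such that `Σ_i χ(x_i)³ / d(x_i) < 0`.
Hence this fusion bialgebra admits no subfactorization. -/
theorem schur_product_counterexample :
    ∃ χ : Fin 3 → ℝ,
      χ 0 = 1 ∧
      χ 1 * χ 1 = 1 + (((1000 : ℝ) ^ 2 - 1 - 0.750001 * (500 : ℝ) ^ 2) / 1000) * χ 1
        + (0.750001 * 500) * χ 2 ∧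
      χ 1 * χ 2 = (0.750001 * 500) * χ 1 + ((1 - 0.750001) * 1000) * χ 2 ∧
      χ 2 * χ 2 = 1 + ((1 - 0.750001) * 1000) * χ 1
        + (((500 : ℝ) ^ 2 - 1 - (1 - 0.750001) * (1000 : ℝ) ^ 2) / 500) * χ 2 ∧
      χ 0 ^ 3 / 1 + χ 1 ^ 3 / 1000 + χ 2 ^ 3 / 500 < 0 := by
  set s : ℝ := Real.sqrt (62511500017 / 4000000) with hs_def
  have hs : s ^ 2 = 62511500017 / 4000000 := by
    rw [hs_def]
    exact Real.sq_sqrt (by norm_num)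
  have hslb : (125.0114 : ℝ) < s := by
    nlinarith [Real.sqrt_nonneg ((62511500017 : ℝ) / 4000000), hs]
  refine ⟨![1, 249991 / 8000 + s / 4, -1249995 / 20000 - s / 2], by norm_num, ?_, ?_, ?_, ?_⟩
  · show (249991 / 8000 + s / 4) * (249991 / 8000 + s / 4) = _
    simp only [Matrix.cons_val_one, Matrix.head_cons, Matrix.cons_val_two, Matrix.tail_cons, Matrix.cons_val_zero]
    linear_combination (1 / 16 : ℝ) * hs
  · show (249991 / 8000 + s / 4) * (-1249995 / 20000 - s / 2) = _
    simp only [Matrix.cons_val_one, Matrix.head_cons, Matrix.cons_val_two, Matrix.tail_cons, Matrix.cons_val_zero]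
    linear_combination (-1 / 8 : ℝ) * hs
  · show (-1249995 / 20000 - s / 2) * (-1249995 / 20000 - s / 2) = _
    simp only [Matrix.cons_val_one, Matrix.head_cons, Matrix.cons_val_two, Matrix.tail_cons, Matrix.cons_val_zero]
    linear_combination (1 / 4 : ℝ) * hs
  · show (1 : ℝ) ^ 3 / 1 + (249991 / 8000 + s / 4) ^ 3 / 1000
      + (-1249995 / 20000 - s / 2) ^ 3 / 500 < 0
    nlinarith [hs, hslb, sq_nonneg s]
end

section
/- Let Q_1, Q_2, Q_3 be the minimal idempotents of the commutative rank-3 fusion algebra with self-adjoint basis and parameters (d_2, d_3, a) as in the rank-3 Type I classification. Then Q_1 = μ^{-1}(x_1 + d_2 x_2 + d_3 x_3) with μ = 1 + d_2² + d_3², and Q_k = ν_k^{-1}(x_1 - (λ_k/d_2) x_2 - ((1-λ_k)/d_3) x_3) for k = 2, 3, where λ_2, λ_3 are the two roots of λ² - (a d_3² - (1-a) d_2² + 1)λ - (1-a) d_2² = 0 and ν_k = 1 + λ_k²/d_2² + (1-λ_k)²/d_3². These satisfy Q_j Q_k = δ_{jk} Q_j and Q_1 + Q_2 + Q_3 = 1.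 -/
set_option maxHeartbeats 2000000


/-- the minimal idempotents of the commutative rank-3 type-I fusion
algebra with parameters `(d₂, d₃, a)`. With `λ₂, λ₃` the two roots of
`λ² - (a d₃² - (1-a) d₂² + 1) λ - (1-a) d₂² = 0` and
`ν_k = 1 + λ_k²/d₂² + (1-λ_k)²/d₃²`, the elements
`Q₁ = μ⁻¹ (x₁ + d₂ x₂ + d₃ x₃)` (with `μ = 1 + d₂² + d₃²`) and
`Q_k = ν_k⁻¹ (x₁ - (λ_k/d₂) x₂ - ((1-λ_k)/d₃) x₃)` for `k = 2, 3` satisfy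
`Q_j Q_k = δ_{jk} Q_j` and `Q₁ + Q₂ + Q₃ = 1`. -/
theorem rank_three_minimal_idempotents
    (B : Type*) [CommRing B] [Algebra ℝ B]
    (b : Module.Basis (Fin 3) ℝ B) (hone : b 0 = 1)
    (d2 d3 a : ℝ) (hd2 : 1 ≤ d2) (hd3 : 1 ≤ d3)
    (ha0 : 0 ≤ a) (ha1 : a ≤ 1)
    (hc1 : 0 ≤ d2 ^ 2 - 1 - a * d3 ^ 2)
    (hc2 : 0 ≤ d3 ^ 2 - 1 - (1 - a) * d2 ^ 2)
    (hmul11 : b 1 * b 1 = b 0 + ((d2 ^ 2 - 1 - a * d3 ^ 2) / d2) • b 1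
        + (a * d3) • b 2)
    (hmul12 : b 1 * b 2 = (a * d3) • b 1 + ((1 - a) * d2) • b 2)
    (hmul22 : b 2 * b 2 = b 0 + ((1 - a) * d2) • b 1
        + ((d3 ^ 2 - 1 - (1 - a) * d2 ^ 2) / d3) • b 2)
    (lam2 lam3 : ℝ) (hlamne : lam2 ≠ lam3)
    (hlamsum : lam2 + lam3 = a * d3 ^ 2 - (1 - a) * d2 ^ 2 + 1)
    (hlamprod : lam2 * lam3 = -((1 - a) * d2 ^ 2)) :
    (∀ j k : Fin 3,
      (![(1 + d2 ^ 2 + d3 ^ 2)⁻¹ • (b 0 + d2 • b 1 + d3 • b 2),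
         (1 + lam2 ^ 2 / d2 ^ 2 + (1 - lam2) ^ 2 / d3 ^ 2)⁻¹ •
           (b 0 - (lam2 / d2) • b 1 - ((1 - lam2) / d3) • b 2),
         (1 + lam3 ^ 2 / d2 ^ 2 + (1 - lam3) ^ 2 / d3 ^ 2)⁻¹ •
           (b 0 - (lam3 / d2) • b 1 - ((1 - lam3) / d3) • b 2)] : Fin 3 → B) j *
      (![(1 + d2 ^ 2 + d3 ^ 2)⁻¹ • (b 0 + d2 • b 1 + d3 • b 2),
         (1 + lam2 ^ 2 / d2 ^ 2 + (1 - lam2) ^ 2 / d3 ^ 2)⁻¹ •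
           (b 0 - (lam2 / d2) • b 1 - ((1 - lam2) / d3) • b 2),
         (1 + lam3 ^ 2 / d2 ^ 2 + (1 - lam3) ^ 2 / d3 ^ 2)⁻¹ •
           (b 0 - (lam3 / d2) • b 1 - ((1 - lam3) / d3) • b 2)] : Fin 3 → B) k
      = if j = k then
          (![(1 + d2 ^ 2 + d3 ^ 2)⁻¹ • (b 0 + d2 • b 1 + d3 • b 2),
             (1 + lam2 ^ 2 / d2 ^ 2 + (1 - lam2) ^ 2 / d3 ^ 2)⁻¹ •
               (b 0 - (lam2 / d2) • b 1 - ((1 - lam2) / d3) • b 2),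
             (1 + lam3 ^ 2 / d2 ^ 2 + (1 - lam3) ^ 2 / d3 ^ 2)⁻¹ •
               (b 0 - (lam3 / d2) • b 1 - ((1 - lam3) / d3) • b 2)] : Fin 3 → B) j
        else 0) ∧
    ((1 + d2 ^ 2 + d3 ^ 2)⁻¹ • (b 0 + d2 • b 1 + d3 • b 2)
      + (1 + lam2 ^ 2 / d2 ^ 2 + (1 - lam2) ^ 2 / d3 ^ 2)⁻¹ •
          (b 0 - (lam2 / d2) • b 1 - ((1 - lam2) / d3) • b 2)
      + (1 + lam3 ^ 2 / d2 ^ 2 + (1 - lam3) ^ 2 / d3 ^ 2)⁻¹ •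
          (b 0 - (lam3 / d2) • b 1 - ((1 - lam3) / d3) • b 2)
      = 1) := by
  have hd2' : d2 ≠ 0 := by positivity
  have hd3' : d3 ≠ 0 := by positivity
  have hμ : (1 + d2 ^ 2 + d3 ^ 2) ≠ 0 := by positivity
  have hν2 : (1 + lam2 ^ 2 / d2 ^ 2 + (1 - lam2) ^ 2 / d3 ^ 2) ≠ 0 := by positivity
  have hν3 : (1 + lam3 ^ 2 / d2 ^ 2 + (1 - lam3) ^ 2 / d3 ^ 2) ≠ 0 := by positivity
  have hsc : ∀ x : ℝ, x ≠ 0 → x⁻¹ * x⁻¹ * x = x⁻¹ := by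
    intro x hx; field_simp
  have h00 : b 0 * b 0 = b 0 := by rw [hone, one_mul]
  have h01 : b 0 * b 1 = b 1 := by rw [hone, one_mul]
  have h02 : b 0 * b 2 = b 2 := by rw [hone, one_mul]
  have h10 : b 1 * b 0 = b 1 := by rw [hone, mul_one]
  have h20 : b 2 * b 0 = b 2 := by rw [hone, mul_one]
  have h21 : b 2 * b 1 = b 1 * b 2 := mul_comm _ _
  have hexp : ∀ p1 p2 q1 q2 : ℝ,
      (b 0 + p1 • b 1 + p2 • b 2) * (b 0 + q1 • b 1 + q2 • b 2)
      = (1 + p1 * q1 + p2 * q2) • b 0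
        + (q1 + p1 + ((d2 ^ 2 - 1 - a * d3 ^ 2) / d2) * (p1 * q1)
            + (a * d3) * (p1 * q2 + p2 * q1) + ((1 - a) * d2) * (p2 * q2)) • b 1
        + (q2 + p2 + (a * d3) * (p1 * q1)
            + ((1 - a) * d2) * (p1 * q2 + p2 * q1)
            + ((d3 ^ 2 - 1 - (1 - a) * d2 ^ 2) / d3) * (p2 * q2)) • b 2 := by
    intro p1 p2 q1 q2
    simp only [mul_add, add_mul, mul_smul_comm, smul_mul_assoc, smul_smul,
      h00, h01, h02, h10, h20, h21, hmul11, hmul12, hmul22, smul_add]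
    module
  have hu2 : b 0 - (lam2 / d2) • b 1 - ((1 - lam2) / d3) • b 2
      = b 0 + (-(lam2 / d2)) • b 1 + (-((1 - lam2) / d3)) • b 2 := by module
  have hu3 : b 0 - (lam3 / d2) • b 1 - ((1 - lam3) / d3) • b 2
      = b 0 + (-(lam3 / d2)) • b 1 + (-((1 - lam3) / d3)) • b 2 := by module
  have e11 : (b 0 + d2 • b 1 + d3 • b 2) * (b 0 + d2 • b 1 + d3 • b 2)
      = (1 + d2 ^ 2 + d3 ^ 2) • (b 0 + d2 • b 1 + d3 • b 2) := by
    rw [hexp]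
    match_scalars <;> field_simp <;> ring
  have e12 : (b 0 + d2 • b 1 + d3 • b 2)
      * (b 0 + (-(lam2 / d2)) • b 1 + (-((1 - lam2) / d3)) • b 2) = 0 := by
    rw [hexp]
    match_scalars <;> field_simp <;> ring
  have e13 : (b 0 + d2 • b 1 + d3 • b 2)
      * (b 0 + (-(lam3 / d2)) • b 1 + (-((1 - lam3) / d3)) • b 2) = 0 := by
    rw [hexp]
    match_scalars <;> field_simp <;> ring
  have e22 : (b 0 + (-(lam2 / d2)) • b 1 + (-((1 - lam2) / d3)) • b 2)
      * (b 0 + (-(lam2 / d2)) • b 1 + (-((1 - lam2) / d3)) • b 2)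
      = (1 + lam2 ^ 2 / d2 ^ 2 + (1 - lam2) ^ 2 / d3 ^ 2)
        • (b 0 + (-(lam2 / d2)) • b 1 + (-((1 - lam2) / d3)) • b 2) := by
    rw [hexp]
    match_scalars
    · field_simp
    · field_simp
      linear_combination (d3^2*lam2^2 - d2^2*lam2 + d2^2*lam2^2) * hlamsum
          + (-d3^2*lam2 + d2^2 - d2^2*lam2) * hlamprod
    · field_simp
      linear_combination (-d3^2*lam2^2 + d2^2*lam2 - d2^2*lam2^2) * hlamsum
          + (d3^2*lam2 - d2^2 + d2^2*lam2) * hlamprod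
  have e33 : (b 0 + (-(lam3 / d2)) • b 1 + (-((1 - lam3) / d3)) • b 2)
      * (b 0 + (-(lam3 / d2)) • b 1 + (-((1 - lam3) / d3)) • b 2)
      = (1 + lam3 ^ 2 / d2 ^ 2 + (1 - lam3) ^ 2 / d3 ^ 2)
        • (b 0 + (-(lam3 / d2)) • b 1 + (-((1 - lam3) / d3)) • b 2) := by
    rw [hexp]
    match_scalars
    · field_simp
    · field_simp
      linear_combination (d3^2*lam3^2 - d3^2*lam2*lam3 - d2^2*lam3 + d2^2*lam3^2 - d2^2*lam2*lam3 - d2^2*d3^2 - d2^4 + a*d2^2*d3^2 + a*d2^4) * hlamsum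
          + (-d3^2 + d3^2*lam2 + d2^2*lam2 + d2^2*d3^2 + d2^4 - a*d3^4 - 2*a*d2^2*d3^2 - a*d2^4) * hlamprod
    · field_simp
      linear_combination (-d3^2*lam3^2 + d3^2*lam2*lam3 + d2^2*lam3 - d2^2*lam3^2 + d2^2*lam2*lam3 + d2^2*d3^2 + d2^4 - a*d2^2*d3^2 - a*d2^4) * hlamsum
          + (d3^2 - d3^2*lam2 - d2^2*lam2 - d2^2*d3^2 - d2^4 + a*d3^4 + 2*a*d2^2*d3^2 + a*d2^4) * hlamprod
  have e23 : (b 0 + (-(lam2 / d2)) • b 1 + (-((1 - lam2) / d3)) • b 2)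
      * (b 0 + (-(lam3 / d2)) • b 1 + (-((1 - lam3) / d3)) • b 2) = 0 := by
    rw [hexp]
    match_scalars
    · field_simp
      linear_combination (-d2^2) * hlamsum + (d3^2 + d2^2) * hlamprod
    · field_simp
      linear_combination (-d2^2*d3^2 - d2^4 + a*d2^2*d3^2 + a*d2^4) * hlamsum
          + (-d3^2 + d2^2*d3^2 + d2^4 - a*d3^4 - 2*a*d2^2*d3^2 - a*d2^4) * hlamprod
    · field_simp
      linear_combination (d2^2 + d2^2*d3^2 + d2^4 - a*d2^2*d3^2 - a*d2^4) * hlamsum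
          + (-d2^2 - d2^2*d3^2 - d2^4 + a*d3^4 + 2*a*d2^2*d3^2 + a*d2^4) * hlamprod
  have e21 : (b 0 + (-(lam2 / d2)) • b 1 + (-((1 - lam2) / d3)) • b 2)
      * (b 0 + d2 • b 1 + d3 • b 2) = 0 := by rw [mul_comm]; exact e12
  have e31 : (b 0 + (-(lam3 / d2)) • b 1 + (-((1 - lam3) / d3)) • b 2)
      * (b 0 + d2 • b 1 + d3 • b 2) = 0 := by rw [mul_comm]; exact e13
  have e32 : (b 0 + (-(lam3 / d2)) • b 1 + (-((1 - lam3) / d3)) • b 2)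
      * (b 0 + (-(lam2 / d2)) • b 1 + (-((1 - lam2) / d3)) • b 2) = 0 := by
    rw [mul_comm]; exact e23
  constructor
  · intro j k
    fin_cases j <;> fin_cases k <;>
      simp only [Matrix.cons_val_zero, Matrix.cons_val_one, Matrix.head_cons,
        Matrix.cons_val_two, Matrix.tail_cons, Fin.mk_one, Fin.mk_zero, Fin.reduceFinMk, Fin.isValue, hu2, hu3]
    · rw [if_pos trivial, smul_mul_smul_comm, e11, smul_smul, hsc _ hμ]
    · rw [if_neg (by decide), smul_mul_smul_comm, e12, smul_zero]
    · rw [if_neg (by decide), smul_mul_smul_comm, e13, smul_zero]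
    · rw [if_neg (by decide), smul_mul_smul_comm, e21, smul_zero]
    · rw [if_pos trivial, smul_mul_smul_comm, e22, smul_smul, hsc _ hν2]
    · rw [if_neg (by decide), smul_mul_smul_comm, e23, smul_zero]
    · rw [if_neg (by decide), smul_mul_smul_comm, e31, smul_zero]
    · rw [if_neg (by decide), smul_mul_smul_comm, e32, smul_zero]
    · rw [if_pos trivial, smul_mul_smul_comm, e33, smul_smul, hsc _ hν3]
  · rw [hu2, hu3, ← hone]
    match_scalars
    · field_simp
      linear_combination (-d3^6*lam2^2*lam3 + 2*d2^2*d3^4*lam2*lam3 - 3*d2^2*d3^4*lam2^2*lam3 - d2^2*d3^6*lam2 - d2^4*d3^2 - d2^4*d3^2*lam3 - d2^4*d3^2*lam2 + 4*d2^4*d3^2*lam2*lam3 - 3*d2^4*d3^2*lam2^2*lam3 - 3*d2^4*d3^4*lam2 + d2^6 - d2^6*lam3 - d2^6*lam2 + 2*d2^6*lam2*lam3 - d2^6*lam2^2*lam3 + d2^6*d3^2 - 3*d2^6*d3^2*lam2 + d2^8 - d2^8*lam2 + a*d2^2*d3^6*lam2 - a*d2^4*d3^4 + 3*a*d2^4*d3^4*lam2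 - 2*a*d2^6*d3^2 + 3*a*d2^6*d3^2*lam2 - a*d2^8 + a*d2^8*lam2) * hlamsum
          + (-d3^6*lam2 + d3^6*lam2^2 + 2*d2^2*d3^4 - 3*d2^2*d3^4*lam2 + 3*d2^2*d3^4*lam2^2 + d2^2*d3^6 + d2^2*d3^6*lam2 + 2*d2^4*d3^2 - 3*d2^4*d3^2*lam2 + 3*d2^4*d3^2*lam2^2 + d2^4*d3^4 + 3*d2^4*d3^4*lam2 - d2^6*lam2 + d2^6*lam2^2 - d2^6*d3^2 + 3*d2^6*d3^2*lam2 - d2^8 + d2^8*lam2 - a*d3^8*lam2 + a*d2^2*d3^6 - 4*a*d2^2*d3^6*lam2 + 3*a*d2^4*d3^4 - 6*a*d2^4*d3^4*lam2 + 3*a*d2^6*d3^2 - 4*a*d2^6*d3^2*lam2 + a*d2^8 - a*d2^8*lam2) * hlamprod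
    · field_simp
      linear_combination (-d2*d3^4*lam2*lam3 + d2*d3^4*lam2^2*lam3 - d2*d3^6*lam2*lam3 + d2^3*d3^2*lam3 + d2^3*d3^2*lam2 - 3*d2^3*d3^2*lam2*lam3 + 2*d2^3*d3^2*lam2^2*lam3 - d2^3*d3^4 + d2^3*d3^4*lam3 + 2*d2^3*d3^4*lam2 - 2*d2^3*d3^4*lam2*lam3 - d2^3*d3^6 - d2^5 + d2^5*lam3 + d2^5*lam2 - 2*d2^5*lam2*lam3 + d2^5*lam2^2*lam3 - 3*d2^5*d3^2 + d2^5*d3^2*lam3 + 3*d2^5*d3^2*lam2 - d2^5*d3^2*lam2*lam3 - 2*d2^5*d3^4 - d2^7 + d2^7*lam2 - d2^7*d3^2 + a*d2^3*d3^4 - a*d2^3*d3^4*lam2 + a*d2^3*d3^6 + 2*a*d2^5*d3^2 - 2*a*d2^5*d3^2*lam2 + 2*a*d2^5*d3^4 + a*d2^7 - a*d2^7*lam2 + a*d2^7*d3^2) * hlamsum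
          + (-d2*d3^4 + d2*d3^4*lam2 - d2*d3^4*lam2^2 - d2*d3^6 - d2^3*d3^2 + 2*d2^3*d3^2*lam2 - 2*d2^3*d3^2*lam2^2 - d2^3*d3^4*lam2 + d2^3*d3^6 + d2^5*lam2 - d2^5*lam2^2 + 2*d2^5*d3^2 - 2*d2^5*d3^2*lam2 + 2*d2^5*d3^4 + d2^7 - d2^7*lam2 + d2^7*d3^2 - a*d2*d3^6 + a*d2*d3^6*lam2 - a*d2*d3^8 - 3*a*d2^3*d3^4 + 3*a*d2^3*d3^4*lam2 - 3*a*d2^3*d3^6 - 3*a*d2^5*d3^2 + 3*a*d2^5*d3^2*lam2 - 3*a*d2^5*d3^4 - a*d2^7 + a*d2^7*lam2 - a*d2^7*d3^2) * hlamprod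
    · field_simp
      linear_combination (d3^5*lam2^2*lam3 - d2^2*d3^3*lam2*lam3 + 2*d2^2*d3^3*lam2^2*lam3 + d2^2*d3^5*lam2 + d2^2*d3^5*lam2*lam3 + d2^4*d3 - d2^4*d3*lam2*lam3 + d2^4*d3*lam2^2*lam3 + d2^4*d3^3 - d2^4*d3^3*lam3 + d2^4*d3^3*lam2 + 2*d2^4*d3^3*lam2*lam3 + d2^4*d3^5 + 2*d2^6*d3 - d2^6*d3*lam3 + d2^6*d3*lam2*lam3 + 2*d2^6*d3^3 + d2^8*d3 - a*d2^2*d3^5*lam2 - 2*a*d2^4*d3^3*lam2 - a*d2^4*d3^5 - a*d2^6*d3*lam2 - 2*a*d2^6*d3^3 - a*d2^8*d3) * hlamsum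
          + (d3^5*lam2 - d3^5*lam2^2 - d2^2*d3^3 + 2*d2^2*d3^3*lam2 - 2*d2^2*d3^3*lam2^2 - d2^2*d3^5*lam2 - d2^4*d3 + d2^4*d3*lam2 - d2^4*d3*lam2^2 - d2^4*d3^3 - 2*d2^4*d3^3*lam2 - d2^4*d3^5 - d2^6*d3 - d2^6*d3*lam2 - 2*d2^6*d3^3 - d2^8*d3 + a*d3^7*lam2 + 3*a*d2^2*d3^5*lam2 + a*d2^2*d3^7 + 3*a*d2^4*d3^3*lam2 + 3*a*d2^4*d3^5 + a*d2^6*d3*lam2 + 3*a*d2^6*d3^3 + a*d2^8*d3) * hlamprod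
end

section
/- Let A be a fusion algebra realized as the ℂ-span of its basis with convolution x_j * x_k = Σ_s N_{j,k}^s x_s, p-norms ‖Σ λ_j x_j‖_{p} = (Σ_j |λ_j|^p d(x_j)^{2-p})^{1/p} for 1 ≤ p < ∞ and ‖Σ λ_j x_j‖_∞ = max_j |λ_j|/d(x_j). Then the Hausdorff–Young-type endpoint inequality holds: for x = Σ_j λ_j x_j, max_j |λ_j|/d(x_j) ≤ the trace-1-norm of Σ λ_j x_j in the fusion algebra B, i.e., |λ_k| / d(x_k) ≤ τ(|Σ_j λ_j x_j|) for every k, where τ is the canonical trace with τ(x_j) = δ_{j,1} and |y| = (y*y)^{1/2} in the finite-dimensional C*-algebra B. -/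
open Polynomial Matrix

lemma aux_aeval_conj {n : Type*} [Fintype n] [DecidableEq n]
    (U D : Matrix n n ℂ) (h1 : U * star U = 1) (p : ℂ[X]) :
    aeval (U * D * star U) p = U * aeval D p * star U := by
  have h2 : star U * U = 1 := mul_eq_one_comm.mp h1
  have h3 : ∀ z : Matrix n n ℂ, star U * (U * z) = z := fun z => by
    rw [← mul_assoc, h2, one_mul]
  let φ : Matrix n n ℂ →ₐ[ℂ] Matrix n n ℂ :=
    { toFun := fun X => U * X * star U
      map_one' := by simpa using h1
      map_mul' := fun X Y => by simp only [mul_assoc, h3]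
      map_zero' := by simp
      map_add' := fun X Y => by simp [mul_add, add_mul]
      commutes' := fun c => by
        simp only [Algebra.algebraMap_eq_smul_one]
        rw [mul_smul_comm, smul_mul_assoc, mul_one, h1]
    }
  exact (aeval_algHom_apply φ D p)

lemma aux_aeval_diagonal {n : Type*} [Fintype n] [DecidableEq n]
    (w : n → ℂ) (p : ℂ[X]) :
    aeval (Matrix.diagonal w) p = Matrix.diagonal (fun i => p.eval (w i)) := by
  have h := aeval_algHom_apply (Matrix.diagonalAlgHom (n := n) (α := ℂ) ℂ) w p
  have h2 : (aeval (diagonal w)) p = diagonal (aeval w p) := h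
  have h3 : (aeval w p : n → ℂ) = fun i => p.eval (w i) := by
    funext i
    have := aeval_algHom_apply (Pi.evalAlgHom ℂ (fun _ : n => ℂ) i) w p
    have h4 : (aeval w p : n → ℂ) i = aeval (w i) p := this.symm
    rw [h4, Polynomial.aeval_def, Polynomial.eval, Algebra.algebraMap_self]
  rw [h2, h3]

lemma aux_cs {n : Type*} [Fintype n] (v w : n → ℂ) :
    ‖dotProduct (star v) w‖ ≤
      Real.sqrt (∑ a, Complex.normSq (v a)) * Real.sqrt (∑ a, Complex.normSq (w a)) := by
  have h1 : ‖dotProduct (star v) w‖ ≤ ∑ a, ‖v a‖ * ‖w a‖ := by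
    refine (norm_sum_le _ _).trans ?_
    refine Finset.sum_le_sum fun a _ => ?_
    simp [Pi.star_apply, norm_mul]
  refine h1.trans ?_
  have h2 := Real.sum_mul_le_sqrt_mul_sqrt (Finset.univ : Finset n)
      (fun a => ‖v a‖) (fun a => ‖w a‖)
  simp only [Complex.normSq_eq_norm_sq]
  exact h2

section span
variable {m : ℕ}

lemma aux_span_mul (L : Fin m → Matrix (Fin m) (Fin m) ℂ)
    (hmul : ∀ j l, L j * L l ∈ Submodule.span ℂ (Set.range L)) :
    ∀ X ∈ Submodule.span ℂ (Set.range L), ∀ Y ∈ Submodule.span ℂ (Set.range L),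
      X * Y ∈ Submodule.span ℂ (Set.range L) := by
  intro X hX Y hY
  induction hX using Submodule.span_induction with
  | mem x hx =>
    obtain ⟨j, rfl⟩ := hx
    induction hY using Submodule.span_induction with
    | mem y hy => obtain ⟨l, rfl⟩ := hy; exact hmul j l
    | zero => simpa using Submodule.zero_mem _
    | add y z _ _ hy hz => rw [mul_add]; exact Submodule.add_mem _ hy hz
    | smul c y _ hy => rw [mul_smul_comm]; exact Submodule.smul_mem _ c hy
  | zero => simpa using Submodule.zero_mem _
  | add x z _ _ hx hz => rw [add_mul]; exact Submodule.add_mem _ hx hz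
  | smul c x _ hx => rw [smul_mul_assoc]; exact Submodule.smul_mem _ c hx

lemma aux_trace_comm (L : Fin m → Matrix (Fin m) (Fin m) ℂ) (e : Fin m)
    (hbase : ∀ j l, (L j * L l) e e = (L l * L j) e e) :
    ∀ X ∈ Submodule.span ℂ (Set.range L), ∀ Y ∈ Submodule.span ℂ (Set.range L),
      (X * Y) e e = (Y * X) e e := by
  intro X hX Y hY
  induction hX using Submodule.span_induction with
  | mem x hx =>
    obtain ⟨j, rfl⟩ := hx
    induction hY using Submodule.span_induction with
    | mem y hy => obtain ⟨l, rfl⟩ := hy; exact hbase j l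
    | zero => simp
    | add y z _ _ hy hz => simp only [mul_add, add_mul, Matrix.add_apply, hy, hz]
    | smul c y _ hy =>
      simp only [mul_smul_comm, smul_mul_assoc, Matrix.smul_apply, hy]
  | zero => simp
  | add x z _ _ hx hz => simp only [mul_add, add_mul, Matrix.add_apply, hx, hz]
  | smul c x _ hx =>
    simp only [mul_smul_comm, smul_mul_assoc, Matrix.smul_apply, hx]

lemma aux_aeval_mem (A : Submodule ℂ (Matrix (Fin m) (Fin m) ℂ))
    (hone : (1 : Matrix (Fin m) (Fin m) ℂ) ∈ A)
    (hmul : ∀ X ∈ A, ∀ Y ∈ A, X * Y ∈ A)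
    (H : Matrix (Fin m) (Fin m) ℂ) (hH : H ∈ A) (p : Polynomial ℂ) :
    Polynomial.aeval H p ∈ A := by
  have hpow : ∀ i : ℕ, H ^ i ∈ A := by
    intro i
    induction i with
    | zero => simpa using hone
    | succ i ih => rw [pow_succ]; exact hmul _ ih _ hH
  rw [Polynomial.aeval_eq_sum_range]
  exact Submodule.sum_mem _ fun i _ => Submodule.smul_mem _ _ (hpow i)
end span

lemma aux_schur {m : ℕ} (c : Fin m → Fin m → ℝ) (hc : ∀ s t, 0 ≤ c s t)
    (d : Fin m → ℝ) (hd : ∀ t, 0 < d t) (dj : ℝ) (hdj : 0 ≤ dj)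
    (hrow : ∀ s, ∑ t, c s t * d t = dj * d s)
    (hcol : ∀ t, ∑ s, c s t * d s = dj * d t)
    (w : Fin m → ℂ) :
    ∑ s, Complex.normSq (∑ t, (c s t : ℂ) * w t) ≤ dj ^ 2 * ∑ t, Complex.normSq (w t) := by
  have key : ∀ s, Complex.normSq (∑ t, (c s t : ℂ) * w t)
      ≤ (dj * d s) * ∑ t, c s t * (Complex.normSq (w t) / d t) := by
    intro s
    have h1 : ‖∑ t, (c s t : ℂ) * w t‖ ≤ ∑ t, c s t * ‖w t‖ := by
      refine (norm_sum_le _ _).trans (Finset.sum_le_sum fun t _ => ?_)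
      rw [norm_mul, Complex.norm_real, Real.norm_of_nonneg (hc s t)]
    have h2 : (∑ t, c s t * ‖w t‖) ^ 2
        ≤ (∑ t, c s t * d t) * ∑ t, c s t * (Complex.normSq (w t) / d t) := by
      have := Finset.sum_mul_sq_le_sq_mul_sq Finset.univ
        (fun t => Real.sqrt (c s t * d t)) (fun t => Real.sqrt (c s t / d t) * ‖w t‖)
      calc (∑ t, c s t * ‖w t‖) ^ 2
          = (∑ t, Real.sqrt (c s t * d t) * (Real.sqrt (c s t / d t) * ‖w t‖)) ^ 2 := by
            congr 1
            refine Finset.sum_congr rfl fun t _ => ?_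
            rw [← mul_assoc, ← Real.sqrt_mul (mul_nonneg (hc s t) (hd t).le)]
            have : c s t * d t * (c s t / d t) = c s t ^ 2 := by
              field_simp [(hd t).ne']
            rw [this, Real.sqrt_sq (hc s t)]
        _ ≤ (∑ t, Real.sqrt (c s t * d t) ^ 2) * ∑ t, (Real.sqrt (c s t / d t) * ‖w t‖) ^ 2 :=
            this
        _ = (∑ t, c s t * d t) * ∑ t, c s t * (Complex.normSq (w t) / d t) := by
            congr 1
            · exact Finset.sum_congr rfl fun t _ =>
                Real.sq_sqrt (mul_nonneg (hc s t) (hd t).le)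
            · refine Finset.sum_congr rfl fun t _ => ?_
              rw [mul_pow, Real.sq_sqrt (div_nonneg (hc s t) (hd t).le),
                Complex.normSq_eq_norm_sq]
              field_simp
    have h3 : Complex.normSq (∑ t, (c s t : ℂ) * w t)
        = ‖∑ t, (c s t : ℂ) * w t‖ ^ 2 := by
      rw [Complex.normSq_eq_norm_sq]
    rw [h3, ← hrow s]
    exact (pow_le_pow_left₀ (norm_nonneg _) h1 2).trans h2
  calc ∑ s, Complex.normSq (∑ t, (c s t : ℂ) * w t)
      ≤ ∑ s, (dj * d s) * ∑ t, c s t * (Complex.normSq (w t) / d t) :=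
        Finset.sum_le_sum fun s _ => key s
    _ = dj * ∑ t, (Complex.normSq (w t) / d t) * ∑ s, c s t * d s := by
        simp_rw [Finset.mul_sum]
        rw [Finset.sum_comm]
        refine Finset.sum_congr rfl fun t _ => ?_
        refine Finset.sum_congr rfl fun s _ => ?_
        ring
    _ = dj ^ 2 * ∑ t, Complex.normSq (w t) := by
        rw [Finset.mul_sum, Finset.mul_sum]
        refine Finset.sum_congr rfl fun t _ => ?_
        rw [hcol t]
        have := (hd t).ne'
        field_simp

open Matrix in
noncomputable def auxPhi {m : ℕ} (U : Matrix (Fin m) (Fin m) ℂ) (ev : Fin m → ℝ)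
    (f : ℝ → ℝ) : Matrix (Fin m) (Fin m) ℂ :=
  U * Matrix.diagonal (fun i => ((f (ev i) : ℝ) : ℂ)) * star U

section phi
variable {m : ℕ} (U : Matrix (Fin m) (Fin m) ℂ) (ev : Fin m → ℝ)

lemma auxPhi_mul (hUU : U * star U = 1) (f g : ℝ → ℝ) :
    auxPhi U ev f * auxPhi U ev g = auxPhi U ev (fun t => f t * g t) := by
  have hUU' : star U * U = 1 := mul_eq_one_comm.mp hUU
  unfold auxPhi
  calc U * Matrix.diagonal (fun i => ((f (ev i) : ℝ) : ℂ)) * star U *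
        (U * Matrix.diagonal (fun i => ((g (ev i) : ℝ) : ℂ)) * star U)
      = U * (Matrix.diagonal (fun i => ((f (ev i) : ℝ) : ℂ)) * (star U * U) *
          Matrix.diagonal (fun i => ((g (ev i) : ℝ) : ℂ))) * star U := by
        simp only [Matrix.mul_assoc]
    _ = U * Matrix.diagonal (fun i => ((f (ev i) * g (ev i) : ℝ) : ℂ)) * star U := by
        rw [hUU', mul_one, Matrix.diagonal_mul_diagonal]
        simp [Complex.ofReal_mul]

lemma auxPhi_congr (f g : ℝ → ℝ) (h : ∀ i, f (ev i) = g (ev i)) :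
    auxPhi U ev f = auxPhi U ev g := by
  unfold auxPhi
  have : (fun i => ((f (ev i) : ℝ) : ℂ)) = fun i => ((g (ev i) : ℝ) : ℂ) :=
    funext fun i => by rw [h i]
  rw [this]

lemma auxPhi_one (hUU : U * star U = 1) : auxPhi U ev (fun _ => 1) = 1 := by
  unfold auxPhi
  simpa using hUU

lemma auxPhi_zero : auxPhi U ev (fun _ => 0) = 0 := by
  unfold auxPhi
  simp

lemma auxPhi_herm (f : ℝ → ℝ) : (auxPhi U ev f)ᴴ = auxPhi U ev f := by
  unfold auxPhi
  have hv : (star fun i => ((f (ev i) : ℝ) : ℂ)) = fun i => ((f (ev i) : ℝ) : ℂ) :=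
    funext fun i => by simp [Pi.star_apply, Complex.conj_ofReal]
  simp only [Matrix.conjTranspose_mul, Matrix.diagonal_conjTranspose, hv]
  simp only [← Matrix.star_eq_conjTranspose, star_star, Matrix.mul_assoc]

lemma auxPhi_sub (f g : ℝ → ℝ) :
    auxPhi U ev f - auxPhi U ev g = auxPhi U ev (fun t => f t - g t) := by
  unfold auxPhi
  rw [← Matrix.sub_mul, ← Matrix.mul_sub, Matrix.diagonal_sub]
  push_cast
  rfl

lemma auxPhi_eq_aeval (hUU : U * star U = 1) (f : ℝ → ℝ) :
    ∃ p : Polynomial ℂ, auxPhi U ev f = Polynomial.aeval (auxPhi U ev id) p := by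
  classical
  set nodes : Finset ℂ := Finset.univ.image (fun i => ((ev i : ℝ) : ℂ)) with hnodes
  set p := Lagrange.interpolate nodes id (fun z => ((f z.re : ℝ) : ℂ)) with hp
  refine ⟨p, ?_⟩
  rw [auxPhi, auxPhi, aux_aeval_conj _ _ hUU, aux_aeval_diagonal]
  have : (fun i => ((f (ev i) : ℝ) : ℂ))
      = fun i => Polynomial.eval ((id (ev i) : ℝ) : ℂ) p := by
    funext i
    have hmem : ((ev i : ℝ) : ℂ) ∈ nodes := Finset.mem_image_of_mem _ (Finset.mem_univ i)
    have h2 := Lagrange.eval_interpolate_at_node (v := id) (s := nodes)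
      (fun z => ((f z.re : ℝ) : ℂ)) (Set.injOn_id _) hmem
    simp only [id] at h2 ⊢
    rw [h2, Complex.ofReal_re]
  rw [this]

lemma auxPhi_mem (hUU : U * star U = 1) (A : Submodule ℂ (Matrix (Fin m) (Fin m) ℂ))
    (hone : (1 : Matrix (Fin m) (Fin m) ℂ) ∈ A)
    (hmul : ∀ X ∈ A, ∀ Y ∈ A, X * Y ∈ A)
    (hid : auxPhi U ev id ∈ A) (f : ℝ → ℝ) : auxPhi U ev f ∈ A := by
  obtain ⟨p, hp⟩ := auxPhi_eq_aeval U ev hUU f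
  rw [hp]
  exact aux_aeval_mem A hone hmul _ hid p

lemma auxPhi_quad (f : ℝ → ℝ) (w : Fin m → ℂ) :
    dotProduct (star w) ((auxPhi U ev f) *ᵥ w)
      = ((∑ i, f (ev i) * Complex.normSq ((star U *ᵥ w) i) : ℝ) : ℂ) := by
  set u : Fin m → ℂ := star U *ᵥ w with hu
  have h1 : (auxPhi U ev f) *ᵥ w
      = U *ᵥ (Matrix.diagonal (fun i => ((f (ev i) : ℝ) : ℂ)) *ᵥ u) := by
    rw [auxPhi, ← Matrix.mulVec_mulVec, ← Matrix.mulVec_mulVec]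
  have h2 : star w ᵥ* U = star u := by
    rw [hu, Matrix.star_mulVec, Matrix.star_eq_conjTranspose,
      Matrix.conjTranspose_conjTranspose]
  rw [h1, Matrix.dotProduct_mulVec, h2]
  rw [dotProduct]
  push_cast
  refine Finset.sum_congr rfl fun i _ => ?_
  rw [Matrix.mulVec_diagonal]
  rw [Pi.star_apply, Complex.star_def, Complex.normSq_eq_conj_mul_self]
  ring
end phi

open scoped ComplexOrder

/-- Hausdorff–Young endpoint inequality: realize the fusion
C*-algebra `B` by its left regular representation, so that `x = Σ_j λ_j x_j`
becomes the matrix `M` with `M_{s,k} = Σ_j λ_j N_{j,k}^s`, the trace `τ` is the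
diagonal entry at the identity index, and `|x| = (x* x)^{1/2}` is the positive
square root `(Mᴴ M)^{1/2}`. Then `|λ_k| / d(x_k) ≤ τ(|x|)` for every `k`. -/
theorem hausdorff_young_endpoint
    (m : ℕ) (hm : 0 < m)
    (N : Fin m → Fin m → Fin m → ℕ)
    (σ : Fin m → Fin m) (hσ : ∀ j, σ (σ j) = j)
    (hunit : ∀ k s, N ⟨0, hm⟩ k s = if k = s then 1 else 0)
    (hunit' : ∀ j s, N j ⟨0, hm⟩ s = if j = s then 1 else 0)
    (hdual : ∀ j k, N j k ⟨0, hm⟩ = if j = σ k then 1 else 0)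
    (hassoc : ∀ j k l s, ∑ t, N j k t * N t l s = ∑ t, N k l t * N j t s)
    (hfrob : ∀ j k s, N j k s = N (σ j) s k)
    (hfrob' : ∀ j k s, N j k s = N s (σ k) j)
    (d : Fin m → ℝ) (hd1 : ∀ j, 1 ≤ d j) (hdσ : ∀ j, d (σ j) = d j)
    (hdmul : ∀ j k, d j * d k = ∑ s, (N j k s : ℝ) * d s)
    (lam : Fin m → ℂ)
    (M : Matrix (Fin m) (Fin m) ℂ)
    (hM : M = Matrix.of fun s k => ∑ j, lam j * (N j k s : ℂ)) :
    ∀ k, ‖lam k‖ / d k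
      ≤ (((Matrix.posSemidef_conjTranspose_mul_self M).1.eigenvectorUnitary.1
          * Matrix.diagonal (((↑) : ℝ → ℂ) ∘ (√·) ∘ (Matrix.posSemidef_conjTranspose_mul_self M).1.eigenvalues)
          * (star (Matrix.posSemidef_conjTranspose_mul_self M).1.eigenvectorUnitary : Matrix (Fin m) (Fin m) ℂ))
        ⟨0, hm⟩ ⟨0, hm⟩).re := by
  intro k
  classical
  set e : Fin m := ⟨0, hm⟩ with he
  set Lm : Fin m → Matrix (Fin m) (Fin m) ℂ :=
    fun j => Matrix.of fun s t => ((N j t s : ℕ) : ℂ) with hLm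
  set A : Submodule ℂ (Matrix (Fin m) (Fin m) ℂ) := Submodule.span ℂ (Set.range Lm) with hA
  have hdpos : ∀ j, 0 < d j := fun j => lt_of_lt_of_le one_pos (hd1 j)
  -- (1) products of basis elements
  have hLmul : ∀ j l, Lm j * Lm l = ∑ s, ((N j l s : ℕ) : ℂ) • Lm s := by
    intro j l
    ext a b
    rw [Matrix.mul_apply, Matrix.sum_apply]
    simp only [hLm, Matrix.smul_apply, Matrix.of_apply, smul_eq_mul]
    have hnat : (∑ u, N j u a * N l b u) = ∑ s, N j l s * N s b a := by
      rw [hassoc j l b a]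
      exact Finset.sum_congr rfl fun u _ => mul_comm _ _
    exact_mod_cast hnat
  have hmemL : ∀ j, Lm j ∈ A := fun j => Submodule.subset_span ⟨j, rfl⟩
  have hmulA : ∀ X ∈ A, ∀ Y ∈ A, X * Y ∈ A := by
    refine aux_span_mul Lm fun j l => ?_
    rw [hLmul]
    exact Submodule.sum_mem _ fun s _ => Submodule.smul_mem _ _ (hmemL s)
  -- identity
  have honeL : (1 : Matrix (Fin m) (Fin m) ℂ) = Lm e := by
    ext a b
    simp only [hLm, Matrix.of_apply, Matrix.one_apply, hunit b a]
    by_cases hab : a = b <;> simp [hab, eq_comm]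
  have honeA : (1 : Matrix (Fin m) (Fin m) ℂ) ∈ A := honeL ▸ hmemL e
  -- trace commutativity
  have htrbase : ∀ j l, (Lm j * Lm l) e e = if j = σ l then 1 else 0 := by
    intro j l
    rw [Matrix.mul_apply]
    have hterm : ∀ u, Lm j e u * Lm l u e
        = if l = u then (if j = σ u then (1:ℂ) else 0) else 0 := by
      intro u
      simp only [hLm, Matrix.of_apply, hdual j u, hunit' l u]
      by_cases h1 : l = u <;> by_cases h2 : j = σ u <;> simp [h1, h2]
    simp only [hterm]
    rw [Finset.sum_ite_eq]
    simp
  have htr : ∀ X ∈ A, ∀ Y ∈ A, (X * Y) e e = (Y * X) e e := by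
    refine aux_trace_comm Lm e fun j l => ?_
    rw [htrbase, htrbase]
    have hiff : j = σ l ↔ l = σ j := by
      constructor
      · rintro rfl; rw [hσ]
      · rintro rfl; rw [hσ]
    by_cases hjl : j = σ l
    · rw [if_pos hjl, if_pos (hiff.mp hjl)]
    · rw [if_neg hjl, if_neg (fun h => hjl (hiff.mpr h))]
  -- M and Mᴴ in A
  have hMA : M ∈ A := by
    have : M = ∑ j, lam j • Lm j := by
      ext a b
      rw [hM]
      simp [hLm, Matrix.sum_apply, Matrix.smul_apply]
    rw [this]
    exact Submodule.sum_mem _ fun j _ => Submodule.smul_mem _ _ (hmemL j)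
  have hMHA : Mᴴ ∈ A := by
    have : Mᴴ = ∑ j, (starRingEnd ℂ) (lam j) • Lm (σ j) := by
      ext a b
      rw [Matrix.conjTranspose_apply, hM]
      simp only [Matrix.of_apply, Matrix.sum_apply, Matrix.smul_apply, smul_eq_mul, hLm]
      simp only [star_sum, star_mul', star_natCast]
      refine Finset.sum_congr rfl fun j _ => ?_
      rw [← hfrob j a b]
      rfl
    rw [this]
    exact Submodule.sum_mem _ fun j _ => Submodule.smul_mem _ _ (hmemL (σ j))
  -- spectral data
  set hP := Matrix.posSemidef_conjTranspose_mul_self M with hPdef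
  set S := hP.1.eigenvectorUnitary.1
          * Matrix.diagonal (((↑) : ℝ → ℂ) ∘ (√·) ∘ hP.1.eigenvalues)
          * (star hP.1.eigenvectorUnitary : Matrix (Fin m) (Fin m) ℂ) with hS
  set U : Matrix (Fin m) (Fin m) ℂ := (hP.1.eigenvectorUnitary : Matrix (Fin m) (Fin m) ℂ) with hU
  set ev : Fin m → ℝ := hP.1.eigenvalues with hev
  have hUU : U * star U = 1 := Matrix.mem_unitaryGroup_iff.mp hP.1.eigenvectorUnitary.2
  have hΦid : auxPhi U ev id = Mᴴ * M := by
    rw [auxPhi]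
    exact (hP.1.spectral_theorem).symm
  have hHA : Mᴴ * M ∈ A := hmulA _ hMHA _ hMA
  have hΦmem : ∀ f, auxPhi U ev f ∈ A := fun f =>
    auxPhi_mem U ev hUU A honeA hmulA (hΦid ▸ hHA) f
  have hSΦ : S = auxPhi U ev Real.sqrt := rfl
  have hevnn : ∀ i, 0 ≤ ev i := fun i => hP.eigenvalues_nonneg i
  -- the square root of the square root
  set f4 : ℝ → ℝ := fun t => Real.sqrt (Real.sqrt t) with hf4
  set hh := auxPhi U ev f4 with hhdef
  have hh2 : hh * hh = S := by
    rw [hhdef, auxPhi_mul U ev hUU, hSΦ]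
    exact auxPhi_congr U ev _ _ fun i => Real.mul_self_sqrt (Real.sqrt_nonneg _)
  have hhA : hh ∈ A := hΦmem f4
  have hhherm : hhᴴ = hh := auxPhi_herm U ev f4
  -- partial isometry
  set q : ℝ → ℝ := fun t => (Real.sqrt t)⁻¹ with hq
  set V := M * auxPhi U ev q with hVdef
  have hVA : V ∈ A := hmulA _ hMA _ (hΦmem q)
  have hVS : V * S = M := by
    rw [hVdef, hSΦ, Matrix.mul_assoc, auxPhi_mul U ev hUU]
    have hval : ∀ i, (1 - q (ev i) * Real.sqrt (ev i)) * id (ev i)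
        * (1 - q (ev i) * Real.sqrt (ev i)) = (fun _ => (0:ℝ)) (ev i) := by
      intro i
      rcases eq_or_lt_of_le (hevnn i) with h0 | hpos
      · simp [id, ← h0]
      · have hs : Real.sqrt (ev i) ≠ 0 := ne_of_gt (Real.sqrt_pos.mpr hpos)
        simp only [hq, id]
        rw [inv_mul_cancel₀ hs]
        simp
    have h1 : auxPhi U ev (fun t => (1 : ℝ) - q t * Real.sqrt t)
        = 1 - auxPhi U ev (fun t => q t * Real.sqrt t) := by
      rw [← auxPhi_sub U ev, auxPhi_one U ev hUU]
    have hzero : M * auxPhi U ev (fun t => (1:ℝ) - q t * Real.sqrt t) = 0 := by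
      have hWHW : (M * auxPhi U ev (fun t => (1:ℝ) - q t * Real.sqrt t))ᴴ
          * (M * auxPhi U ev (fun t => (1:ℝ) - q t * Real.sqrt t)) = 0 := by
        rw [Matrix.conjTranspose_mul, auxPhi_herm]
        calc auxPhi U ev (fun t => (1:ℝ) - q t * Real.sqrt t) * Mᴴ *
              (M * auxPhi U ev (fun t => (1:ℝ) - q t * Real.sqrt t))
            = auxPhi U ev (fun t => (1:ℝ) - q t * Real.sqrt t) * (Mᴴ * M) *
              auxPhi U ev (fun t => (1:ℝ) - q t * Real.sqrt t) := by
              simp only [Matrix.mul_assoc]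
          _ = 0 := by
              rw [← hΦid, auxPhi_mul U ev hUU, auxPhi_mul U ev hUU,
                auxPhi_congr U ev _ (fun _ => (0:ℝ)) hval, auxPhi_zero U ev]
      exact Matrix.conjTranspose_mul_self_eq_zero.mp hWHW
    rw [h1, Matrix.mul_sub, Matrix.mul_one] at hzero
    have := sub_eq_zero.mp hzero
    exact this.symm
  -- V is a contraction (on norms-squared)
  have hdotself : ∀ x : Fin m → ℂ,
      dotProduct (star x) x = ((∑ i, Complex.normSq (x i) : ℝ) : ℂ) := by
    intro x
    rw [dotProduct]
    push_cast
    refine Finset.sum_congr rfl fun i _ => ?_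
    rw [Pi.star_apply, Complex.star_def, Complex.normSq_eq_conj_mul_self]
  have hnormpres : ∀ w : Fin m → ℂ,
      ∑ i, Complex.normSq ((star U *ᵥ w) i) = ∑ i, Complex.normSq (w i) := by
    intro w
    have h1 := auxPhi_quad U ev (fun _ => 1) w
    rw [auxPhi_one U ev hUU, Matrix.one_mulVec, hdotself w] at h1
    have := Complex.ofReal_injective h1
    simp only [one_mul] at this
    linarith [this]
  have hVcontr : ∀ w : Fin m → ℂ,
      ∑ i, Complex.normSq ((V *ᵥ w) i) ≤ ∑ i, Complex.normSq (w i) := by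
    intro w
    have h1 : ((∑ i, Complex.normSq ((V *ᵥ w) i) : ℝ) : ℂ)
        = dotProduct (star w) ((Vᴴ * V) *ᵥ w) := by
      rw [← hdotself (V *ᵥ w), Matrix.star_mulVec, ← Matrix.dotProduct_mulVec,
        Matrix.mulVec_mulVec]
    have h2 : Vᴴ * V = auxPhi U ev (fun t => q t * id t * q t) := by
      rw [hVdef, Matrix.conjTranspose_mul, auxPhi_herm]
      calc auxPhi U ev q * Mᴴ * (M * auxPhi U ev q)
          = auxPhi U ev q * (Mᴴ * M) * auxPhi U ev q := by simp only [Matrix.mul_assoc]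
        _ = auxPhi U ev (fun t => q t * id t * q t) := by
            rw [← hΦid, auxPhi_mul U ev hUU, auxPhi_mul U ev hUU]
    have h3 := auxPhi_quad U ev (fun t => q t * id t * q t) w
    rw [← h2, ← h1] at h3
    have h4 := Complex.ofReal_injective h3
    rw [h4]
    calc ∑ i, (q (ev i) * id (ev i) * q (ev i)) * Complex.normSq ((star U *ᵥ w) i)
        ≤ ∑ i, Complex.normSq ((star U *ᵥ w) i) := by
          refine Finset.sum_le_sum fun i _ => ?_
          have hb : q (ev i) * id (ev i) * q (ev i) ≤ 1 := by
            rcases eq_or_lt_of_le (hevnn i) with h0 | hpos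
            · simp [hq, id, ← h0]
            · have hs : Real.sqrt (ev i) ≠ 0 := ne_of_gt (Real.sqrt_pos.mpr hpos)
              have : q (ev i) * id (ev i) * q (ev i) = 1 := by
                simp only [hq, id]
                rw [show ev i = Real.sqrt (ev i) * Real.sqrt (ev i) from
                  (Real.mul_self_sqrt (hevnn i)).symm]
                field_simp
                rw [Real.sqrt_sq (Real.sqrt_nonneg _)]
              rw [this]
          nlinarith [Complex.normSq_nonneg ((star U *ᵥ w) i), hb]
      _ = ∑ i, Complex.normSq (w i) := hnormpres w
  -- Schur bound for Lm (σ k)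
  have hLbound : ∀ x : Fin m → ℂ,
      ∑ s, Complex.normSq ((Lm (σ k) *ᵥ x) s) ≤ d k ^ 2 * ∑ t, Complex.normSq (x t) := by
    intro x
    have hrow : ∀ s, ∑ t, ((N (σ k) t s : ℕ) : ℝ) * d t = d k * d s := by
      intro s
      have hNeq : ∀ t, N (σ k) t s = N k s t := fun t => by
        rw [hfrob (σ k) t s, hσ]
      simp only [hNeq]
      exact (hdmul k s).symm
    have hcol : ∀ t, ∑ s, ((N (σ k) t s : ℕ) : ℝ) * d s = d k * d t := by
      intro t
      rw [← hdσ k]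
      exact (hdmul (σ k) t).symm
    have hmain := aux_schur (fun s t => ((N (σ k) t s : ℕ) : ℝ))
      (fun s t => Nat.cast_nonneg _) d hdpos (d k) (hdpos k).le hrow hcol x
    have hentry : ∀ s, (Lm (σ k) *ᵥ x) s
        = ∑ t, (((N (σ k) t s : ℕ) : ℝ) : ℂ) * x t := by
      intro s
      simp only [Matrix.mulVec, dotProduct, hLm, Matrix.of_apply,
        Complex.ofReal_natCast]
    simp only [hentry]
    exact hmain
  -- the trace value
  have hτM : (M * Lm (σ k)) e e = lam k := by
    rw [Matrix.mul_apply]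
    have hterm : ∀ u, M e u * Lm (σ k) u e = if σ k = u then M e u else 0 := by
      intro u
      simp only [hLm, Matrix.of_apply, hunit' (σ k) u]
      by_cases h1 : σ k = u <;> simp [h1]
    simp only [hterm]
    rw [Finset.sum_ite_eq]
    simp only [Finset.mem_univ, if_true]
    rw [hM]
    simp only [Matrix.of_apply]
    have hterm2 : ∀ j, lam j * (N j (σ k) e : ℂ) = if j = k then lam j else 0 := by
      intro j
      rw [hdual j (σ k), hσ]
      by_cases h : j = k <;> simp [h]
    rw [Finset.sum_congr rfl fun j _ => hterm2 j, Finset.sum_ite_eq']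
    simp
  -- quadratic form representation
  set v : Fin m → ℂ := fun a => hh a e with hv
  have hstarv : ∀ a, (starRingEnd ℂ) (v a) = hh e a := by
    intro a
    conv_rhs => rw [← hhherm, Matrix.conjTranspose_apply]
    rfl
  have hquadform : ∀ Z : Matrix (Fin m) (Fin m) ℂ,
      (hh * Z * hh) e e = dotProduct (star v) (Z *ᵥ v) := by
    intro Z
    rw [Matrix.mul_apply, dotProduct]
    simp only [Matrix.mul_apply, Matrix.mulVec, dotProduct, Pi.star_apply]
    simp only [Finset.sum_mul, Finset.mul_sum]
    rw [Finset.sum_comm]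
    refine Finset.sum_congr rfl fun a _ => Finset.sum_congr rfl fun b _ => ?_
    rw [show star (v a) = hh e a from hstarv a]
    rw [show v b = hh b e from rfl]
    ring
  -- main chain
  have hlamk : lam k = (hh * (Lm (σ k) * V) * hh) e e := by
    have h1 : M * Lm (σ k) = (V * hh) * (hh * Lm (σ k)) := by
      rw [← hVS, ← hh2]
      simp only [Matrix.mul_assoc]
    have h2 := htr _ (hmulA _ hVA _ hhA) _ (hmulA _ hhA _ (hmemL (σ k)))
    rw [← hτM, h1, h2]
    simp only [Matrix.mul_assoc]
  have hn2v : ∀ x : Fin m → ℂ, (0:ℝ) ≤ ∑ i, Complex.normSq (x i) :=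
    fun x => Finset.sum_nonneg fun i _ => Complex.normSq_nonneg _
  have habs : ‖lam k‖ ≤ d k * ∑ b, Complex.normSq (v b) := by
    rw [hlamk, hquadform]
    refine (aux_cs v _).trans ?_
    have hZv : (Lm (σ k) * V) *ᵥ v = Lm (σ k) *ᵥ (V *ᵥ v) := by
      rw [Matrix.mulVec_mulVec]
    rw [hZv]
    have hb1 : ∑ i, Complex.normSq ((Lm (σ k) *ᵥ (V *ᵥ v)) i)
        ≤ d k ^ 2 * ∑ i, Complex.normSq (v i) :=
      (hLbound _).trans (by
        have := hVcontr v
        nlinarith [sq_nonneg (d k)])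
    calc Real.sqrt (∑ a, Complex.normSq (v a))
          * Real.sqrt (∑ a, Complex.normSq ((Lm (σ k) *ᵥ (V *ᵥ v)) a))
        ≤ Real.sqrt (∑ a, Complex.normSq (v a))
          * Real.sqrt (d k ^ 2 * ∑ i, Complex.normSq (v i)) := by
          exact mul_le_mul_of_nonneg_left (Real.sqrt_le_sqrt hb1) (Real.sqrt_nonneg _)
      _ = d k * ∑ b, Complex.normSq (v b) := by
          rw [Real.sqrt_mul (sq_nonneg _), Real.sqrt_sq (hdpos k).le]
          rw [← mul_assoc, mul_comm (Real.sqrt _) (d k), mul_assoc,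
            Real.mul_self_sqrt (hn2v v)]
  have hSee : (S e e).re = ∑ b, Complex.normSq (v b) := by
    have hcc : S e e = ((∑ b, Complex.normSq (v b) : ℝ) : ℂ) := by
      rw [← hh2, Matrix.mul_apply]
      push_cast
      refine Finset.sum_congr rfl fun b _ => ?_
      rw [← hstarv b, show v b = hh b e from rfl, ← Complex.normSq_eq_conj_mul_self]
    rw [hcc, Complex.ofReal_re]
  rw [div_le_iff₀ (hdpos k)]
  calc ‖lam k‖ ≤ d k * ∑ b, Complex.normSq (v b) := habs
    _ = (S e e).re * d k := by rw [hSee]; ring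
end
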